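/- arXiv:2201.03452 — 4 statements merged into one kernel-verified Lean document; each statement's English description precedes it below -/
import Mathlib

section
/- Let d(n) denote the GF(2)-dimension of the kernel of the Lights Out map of the n × n grid graph. Then for all natural numbers n ≥ 1 and k ≥ 1, d(nk − 1) ≥ d(n − 1). -/
/-- The Lights Out map of a finite simple graph `G`:
`Φ_G(x)(v) = x(v) + Σ_{u ~ v} x(u)` over GF(2), as a GF(2)-linear map. -/
def lightsOut {V : Type*} [Fintype V] (G : SimpleGraph V) [DecidableRel G.Adj] :
    (V → ZMod 2) →ₗ[ZMod 2] (V → ZMod 2) where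
  toFun x := fun v => x v + ∑ u ∈ G.neighborFinset v, x u
  map_add' x y := by
    funext v
    simp [Finset.sum_add_distrib]
    ring
  map_smul' c x := by
    funext v
    simp [Finset.mul_sum, mul_add]

/-- The Hamming weight of a GF(2) vector: the number of coordinates equal to 1. -/
def hammingWeight {V : Type*} [Fintype V] (x : V → ZMod 2) : ℕ :=
  (Finset.univ.filter fun v => x v = 1).card

/-- The `n × n` grid graph on `Fin n × Fin n`: two vertices are adjacent when they
agree in one coordinate and differ by exactly 1 in the other. -/
def gridGraph (n : ℕ) : SimpleGraph (Fin n × Fin n) where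
  Adj a b := (a.1 = b.1 ∧ (a.2.val + 1 = b.2.val ∨ b.2.val + 1 = a.2.val)) ∨
             (a.2 = b.2 ∧ (a.1.val + 1 = b.1.val ∨ b.1.val + 1 = a.1.val))
  symm := by
    constructor
    rintro a b (⟨h1, h2⟩ | ⟨h1, h2⟩)
    · exact Or.inl ⟨h1.symm, h2.symm⟩
    · exact Or.inr ⟨h1.symm, h2.symm⟩
  loopless := by
    constructor
    rintro a (⟨_, h | h⟩ | ⟨_, h | h⟩) <;> omega

instance (n : ℕ) : DecidableRel (gridGraph n).Adj := fun a b => by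
  unfold gridGraph
  exact inferInstanceAs (Decidable (_ ∨ _))

/-- zero extension of a grid vector to ℤ × ℤ -/
noncomputable def ext2 (m : ℕ) (y : Fin m × Fin m → ZMod 2) : ℤ → ℤ → ZMod 2 :=
  fun i j => if h : 0 ≤ i ∧ i < m ∧ 0 ≤ j ∧ j < m then
    y (⟨i.toNat, by omega⟩, ⟨j.toNat, by omega⟩) else 0

lemma ext2_apply (m : ℕ) (y : Fin m × Fin m → ZMod 2) (a b : Fin m) :
    ext2 m y a b = y (a, b) := by
  have h1 : (a:ℤ) < m := by exact_mod_cast a.isLt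
  have h2 : (b:ℤ) < m := by exact_mod_cast b.isLt
  simp only [ext2]
  rw [dif_pos ⟨Int.ofNat_nonneg _, h1, Int.ofNat_nonneg _, h2⟩]
  congr 1 <;> simp

lemma sum_ind (m : ℕ) (y : Fin m × Fin m → ZMod 2) (A B : ℤ) :
    ∑ u : Fin m × Fin m, (if (u.1:ℤ) = A ∧ (u.2:ℤ) = B then y u else 0) =
      ext2 m y A B := by
  by_cases h : 0 ≤ A ∧ A < m ∧ 0 ≤ B ∧ B < m
  · rw [Finset.sum_eq_single (⟨⟨A.toNat, by omega⟩, ⟨B.toNat, by omega⟩⟩ : Fin m × Fin m)]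
    · simp only [ext2, dif_pos h]
      rw [if_pos]
      constructor <;> simp <;> omega
    · rintro ⟨c, d⟩ - hne
      rw [if_neg]
      rintro ⟨hc, hd⟩
      apply hne
      ext <;> simp_all <;> omega
    · simp
  · rw [Finset.sum_eq_zero, ext2, dif_neg h]
    rintro ⟨c, d⟩ -
    rw [if_neg]
    rintro ⟨hc, hd⟩
    have := c.isLt; have := d.isLt
    apply h
    refine ⟨by omega, by exact_mod_cast hc ▸ Int.ofNat_lt.mpr c.isLt, by omega, by exact_mod_cast hd ▸ Int.ofNat_lt.mpr d.isLt⟩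

lemma ite_or4 (P1 P2 P3 P4 : Prop) [Decidable P1] [Decidable P2] [Decidable P3] [Decidable P4]
    (h12 : ¬(P1 ∧ P2)) (h13 : ¬(P1 ∧ P3)) (h14 : ¬(P1 ∧ P4)) (h23 : ¬(P2 ∧ P3))
    (h24 : ¬(P2 ∧ P4)) (h34 : ¬(P3 ∧ P4)) (x : ZMod 2) :
    (if P1 ∨ P2 ∨ P3 ∨ P4 then x else 0) =
      (if P1 then x else 0) + (if P2 then x else 0) + (if P3 then x else 0) +
        (if P4 then x else 0) := by
  split_ifs <;> simp_all <;> tauto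

lemma sum_neighbors (m : ℕ) (y : Fin m × Fin m → ZMod 2) (a b : Fin m) :
    ∑ u ∈ (gridGraph m).neighborFinset (a, b), y u =
      ext2 m y (a - 1) b + ext2 m y (a + 1) b + ext2 m y a (b - 1) + ext2 m y a (b + 1) := by
  rw [SimpleGraph.neighborFinset_eq_filter, Finset.sum_filter]
  have key : ∀ u : Fin m × Fin m, (if (gridGraph m).Adj (a, b) u then y u else 0) =
      (if (u.1:ℤ) = (a:ℤ) - 1 ∧ (u.2:ℤ) = (b:ℤ) then y u else 0) +
      (if (u.1:ℤ) = (a:ℤ) + 1 ∧ (u.2:ℤ) = (b:ℤ) then y u else 0) +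
      (if (u.1:ℤ) = (a:ℤ) ∧ (u.2:ℤ) = (b:ℤ) - 1 then y u else 0) +
      (if (u.1:ℤ) = (a:ℤ) ∧ (u.2:ℤ) = (b:ℤ) + 1 then y u else 0) := by
    rintro ⟨c, d⟩
    have hadj : (gridGraph m).Adj (a, b) (c, d) ↔
        (((c:ℤ) = (a:ℤ) - 1 ∧ (d:ℤ) = (b:ℤ)) ∨ ((c:ℤ) = (a:ℤ) + 1 ∧ (d:ℤ) = (b:ℤ)) ∨
         ((c:ℤ) = (a:ℤ) ∧ (d:ℤ) = (b:ℤ) - 1) ∨ ((c:ℤ) = (a:ℤ) ∧ (d:ℤ) = (b:ℤ) + 1)) := by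
      show ((a = c ∧ ((b:ℕ)+1 = (d:ℕ) ∨ (d:ℕ)+1 = (b:ℕ))) ∨
        (b = d ∧ ((a:ℕ)+1 = (c:ℕ) ∨ (c:ℕ)+1 = (a:ℕ)))) ↔ _
      rw [Fin.ext_iff, Fin.ext_iff]
      omega
    rw [if_congr hadj rfl rfl]
    exact ite_or4 _ _ _ _ (by omega) (by omega) (by omega) (by omega) (by omega) (by omega) _
  rw [Finset.sum_congr rfl (fun u _ => key u), Finset.sum_add_distrib,
    Finset.sum_add_distrib, Finset.sum_add_distrib, sum_ind, sum_ind, sum_ind, sum_ind]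

def rho (n : ℕ) (i : ℤ) : ℤ :=
  if i % (2 * n) < n then i % (2 * n) else 2 * n - 2 - i % (2 * n)

lemma emod_shift (i t N : ℤ) : (i + t) % N = (i % N + t) % N := by
  conv_lhs => rw [← Int.emod_add_mul_ediv i N]
  rw [show i % N + N * (i / N) + t = i % N + t + N * (i / N) by ring,
    Int.add_mul_emod_self_left]

lemma rho_step (n : ℕ) (hn : 2 ≤ n) (i : ℤ) :
    (0 ≤ rho n i ∧ rho n i ≤ (n:ℤ) - 2 ∧
      ((rho n (i + 1) = rho n i + 1 ∧ rho n (i - 1) = rho n i - 1) ∨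
       (rho n (i + 1) = rho n i - 1 ∧ rho n (i - 1) = rho n i + 1))) ∨
    ((rho n i = -1 ∨ rho n i = (n:ℤ) - 1) ∧ rho n (i + 1) = rho n (i - 1)) := by
  have hN : (0:ℤ) < 2 * n := by positivity
  set r := i % (2 * n) with hr
  have hr0 : 0 ≤ r := Int.emod_nonneg i (by omega)
  have hr1 : r < 2 * n := Int.emod_lt_of_pos i hN
  have h1 : (i + 1) % (2 * n) = (r + 1) % (2 * n) := emod_shift i 1 (2 * n)
  have h2 : (i - 1) % (2 * n) = (r - 1) % (2 * n) := by
    rw [sub_eq_add_neg, sub_eq_add_neg]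
    exact emod_shift i (-1) (2 * n)
  have h1' : (r + 1) % (2 * n) = if r + 1 < 2 * n then r + 1 else 0 := by
    split_ifs with h
    · exact Int.emod_eq_of_lt (by omega) h
    · have : r + 1 = 2 * n := by omega
      rw [this, Int.emod_self]
  have h2' : (r - 1) % (2 * n) = if 1 ≤ r then r - 1 else 2 * n - 1 := by
    split_ifs with h
    · exact Int.emod_eq_of_lt (by omega) (by omega)
    · have : r - 1 = (2 * n - 1) + (2 * n) * (-1) := by omega
      rw [this, Int.add_mul_emod_self_left, Int.emod_eq_of_lt (by omega) (by omega)]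
  simp only [rho, ← hr, h1, h2, h1', h2']
  split_ifs <;> omega

lemma rho_id (n : ℕ) (i : ℤ) (h0 : 0 ≤ i) (h1 : i < (n:ℤ) - 1) : rho n i = i := by
  have hi : i % (2 * n) = i := Int.emod_eq_of_lt h0 (by omega)
  simp only [rho, hi]
  rw [if_pos (by omega)]

lemma rho_bad (n : ℕ) (hn : 2 ≤ n) (t : ℤ) (ht : t % n = (n:ℤ) - 1) :
    rho n t = -1 ∨ rho n t = (n:ℤ) - 1 := by
  set r := t % (2 * n) with hr
  have hr0 : 0 ≤ r := Int.emod_nonneg t (by omega)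
  have hr1 : r < 2 * n := Int.emod_lt_of_pos t (by positivity)
  have hrn : r % n = (n:ℤ) - 1 := by
    rw [hr, Int.emod_emod_of_dvd t ⟨2, by ring⟩, ht]
  have hq := Int.mul_ediv_add_emod r n
  have hq0 : 0 ≤ r / n := Int.ediv_nonneg hr0 (by omega)
  have hq1 : r / n < 2 := by
    rw [Int.ediv_lt_iff_lt_mul (by omega : (0:ℤ) < n)]
    omega
  have hcase : r = (n:ℤ) - 1 ∨ r = 2 * n - 1 := by
    interval_cases h : r / n <;> omega
  simp only [rho, ← hr]
  rcases hcase with h | h <;> rw [h] <;> split_ifs <;> omega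

lemma ext2_add (m : ℕ) (x y : Fin m × Fin m → ZMod 2) (i j : ℤ) :
    ext2 m (x + y) i j = ext2 m x i j + ext2 m y i j := by
  simp only [ext2]; split <;> simp

lemma ext2_smul (m : ℕ) (c : ZMod 2) (x : Fin m × Fin m → ZMod 2) (i j : ℤ) :
    ext2 m (c • x) i j = c • ext2 m x i j := by
  simp only [ext2]; split <;> simp

lemma ext2_bad_left (m : ℕ) (x : Fin m × Fin m → ZMod 2) (t s : ℤ)
    (ht : t = -1 ∨ t = (m:ℤ)) : ext2 m x t s = 0 := by
  rw [ext2, dif_neg]; omega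

lemma ext2_bad_right (m : ℕ) (x : Fin m × Fin m → ZMod 2) (t s : ℤ)
    (hs : s = -1 ∨ s = (m:ℤ)) : ext2 m x t s = 0 := by
  rw [ext2, dif_neg]; omega

/-- The tiling map from the (n-1)-grid to the m-grid. -/
noncomputable def tile (n m : ℕ) :
    ((Fin (n-1) × Fin (n-1)) → ZMod 2) →ₗ[ZMod 2] ((Fin m × Fin m) → ZMod 2) where
  toFun x := fun v => ext2 (n-1) x (rho n v.1) (rho n v.2)
  map_add' x y := by funext v; exact ext2_add _ _ _ _ _
  map_smul' c x := by funext v; exact ext2_smul _ _ _ _ _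

lemma tile_apply (n m : ℕ) (x : (Fin (n-1) × Fin (n-1)) → ZMod 2) (v : Fin m × Fin m) :
    tile n m x v = ext2 (n-1) x (rho n v.1) (rho n v.2) := rfl

lemma neg_one_emod (n : ℕ) (hn : 2 ≤ n) : (-1 : ℤ) % n = (n:ℤ) - 1 := by
  rw [show (-1:ℤ) = ((n:ℤ) - 1) + n * (-1) by ring, Int.add_mul_emod_self_left,
    Int.emod_eq_of_lt (by omega) (by omega)]

lemma ext2_tile_left (n m : ℕ) (hn : 2 ≤ n) (hm : (m:ℤ) % n = (n:ℤ) - 1)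
    (x : (Fin (n-1) × Fin (n-1)) → ZMod 2) (t s : ℤ)
    (ht : -1 ≤ t ∧ t ≤ (m:ℤ)) (hs : 0 ≤ s ∧ s < (m:ℤ)) :
    ext2 m (tile n m x) t s = ext2 (n-1) x (rho n t) (rho n s) := by
  have hp : ((n-1:ℕ):ℤ) = (n:ℤ) - 1 := by omega
  by_cases h : 0 ≤ t ∧ t < (m:ℤ)
  · rw [ext2, dif_pos ⟨h.1, h.2, hs.1, hs.2⟩, tile_apply]
    congr 2 <;> simp <;> omega
  · have hbad : rho n t = -1 ∨ rho n t = (n:ℤ) - 1 := by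
      apply rho_bad n hn
      rcases (by omega : t = -1 ∨ t = (m:ℤ)) with h' | h' <;> rw [h']
      · exact neg_one_emod n hn
      · exact hm
    rw [ext2_bad_left m _ t s (by omega), ext2_bad_left (n-1) x _ _ (by omega)]

lemma ext2_tile_right (n m : ℕ) (hn : 2 ≤ n) (hm : (m:ℤ) % n = (n:ℤ) - 1)
    (x : (Fin (n-1) × Fin (n-1)) → ZMod 2) (t s : ℤ)
    (ht : 0 ≤ t ∧ t < (m:ℤ)) (hs : -1 ≤ s ∧ s ≤ (m:ℤ)) :
    ext2 m (tile n m x) t s = ext2 (n-1) x (rho n t) (rho n s) := by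
  have hp : ((n-1:ℕ):ℤ) = (n:ℤ) - 1 := by omega
  by_cases h : 0 ≤ s ∧ s < (m:ℤ)
  · rw [ext2, dif_pos ⟨ht.1, ht.2, h.1, h.2⟩, tile_apply]
    congr 2 <;> simp <;> omega
  · have hbad : rho n s = -1 ∨ rho n s = (n:ℤ) - 1 := by
      apply rho_bad n hn
      rcases (by omega : s = -1 ∨ s = (m:ℤ)) with h' | h' <;> rw [h']
      · exact neg_one_emod n hn
      · exact hm
    rw [ext2_bad_right m _ t s (by omega), ext2_bad_right (n-1) x _ _ (by omega)]

lemma lightsOut_apply {V : Type*} [Fintype V] (G : SimpleGraph V) [DecidableRel G.Adj]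
    (x : V → ZMod 2) (v : V) :
    lightsOut G x v = x v + ∑ u ∈ G.neighborFinset v, x u := rfl

lemma zmod2_add_self (z : ZMod 2) : z + z = 0 := by
  fin_cases z <;> rfl

lemma tile_mem_ker (n m : ℕ) (hn : 2 ≤ n) (hm : (m:ℤ) % n = (n:ℤ) - 1)
    (x : (Fin (n-1) × Fin (n-1)) → ZMod 2)
    (hx : lightsOut (gridGraph (n-1)) x = 0) :
    lightsOut (gridGraph m) (tile n m x) = 0 := by
  have hp : ((n-1:ℕ):ℤ) = (n:ℤ) - 1 := by omega
  -- the ℤ-level kernel condition for x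
  have hX : ∀ i j : ℤ, 0 ≤ i → i < (n:ℤ) - 1 → 0 ≤ j → j < (n:ℤ) - 1 →
      ext2 (n-1) x i j + (ext2 (n-1) x (i-1) j + ext2 (n-1) x (i+1) j +
        ext2 (n-1) x i (j-1) + ext2 (n-1) x i (j+1)) = 0 := by
    intro i j hi0 hi1 hj0 hj1
    have hi : i.toNat < n - 1 := by omega
    have hj : j.toNat < n - 1 := by omega
    have h := congrFun hx (⟨i.toNat, hi⟩, ⟨j.toNat, hj⟩)
    rw [lightsOut_apply, sum_neighbors] at h
    have hci : ((⟨i.toNat, hi⟩ : Fin (n-1)) : ℤ) = i := by simp; omega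
    have hcj : ((⟨j.toNat, hj⟩ : Fin (n-1)) : ℤ) = j := by simp; omega
    rw [hci, hcj, ← ext2_apply (n-1) x ⟨i.toNat, hi⟩ ⟨j.toNat, hj⟩, hci, hcj] at h
    simpa using h
  funext v
  rcases v with ⟨a, b⟩
  have ham : (a:ℤ) < m := by exact_mod_cast a.isLt
  have hbm : (b:ℤ) < m := by exact_mod_cast b.isLt
  have ha0 : (0:ℤ) ≤ (a:ℤ) := Int.ofNat_nonneg _
  have hb0 : (0:ℤ) ≤ (b:ℤ) := Int.ofNat_nonneg _
  rw [Pi.zero_apply, lightsOut_apply, sum_neighbors, tile_apply,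
    ext2_tile_left n m hn hm x ((a:ℤ)-1) b (by omega) (by omega),
    ext2_tile_left n m hn hm x ((a:ℤ)+1) b (by omega) (by omega),
    ext2_tile_right n m hn hm x a ((b:ℤ)-1) (by omega) (by omega),
    ext2_tile_right n m hn hm x a ((b:ℤ)+1) (by omega) (by omega)]
  rcases rho_step n hn a with ⟨hA0, hA1, hA⟩ | ⟨hA, hA2⟩
  · rcases rho_step n hn b with ⟨hB0, hB1, hB⟩ | ⟨hB, hB2⟩
    · -- both regular
      have h := hX (rho n (a:ℤ)) (rho n (b:ℤ)) hA0 (by omega) hB0 (by omega)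
      rcases hA with ⟨e1, e2⟩ | ⟨e1, e2⟩ <;> rcases hB with ⟨f1, f2⟩ | ⟨f1, f2⟩ <;>
        rw [e1, e2, f1, f2] <;> linear_combination h
    · -- b singular
      have z1 : ∀ t, ext2 (n-1) x t (rho n (b:ℤ)) = 0 := fun t =>
        ext2_bad_right (n-1) x t _ (by omega)
      rw [z1, z1, z1, hB2]
      simp [zmod2_add_self]
  · rcases rho_step n hn b with ⟨hB0, hB1, hB⟩ | ⟨hB, hB2⟩
    · -- a singular
      have z1 : ∀ s, ext2 (n-1) x (rho n (a:ℤ)) s = 0 := fun s =>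
        ext2_bad_left (n-1) x _ s (by omega)
      rw [z1, z1, z1, hA2]
      simp [zmod2_add_self]
    · -- both singular
      have z1 : ∀ s, ext2 (n-1) x (rho n (a:ℤ)) s = 0 := fun s =>
        ext2_bad_left (n-1) x _ s (by omega)
      have z2 : ∀ t, ext2 (n-1) x t (rho n (b:ℤ)) = 0 := fun t =>
        ext2_bad_right (n-1) x t _ (by omega)
      rw [z1, z1, z1, z2, z2]
      ring

lemma tile_injective (n m : ℕ) (hn : 2 ≤ n) (hm : n - 1 ≤ m) :
    Function.Injective (tile n m) := by
  intro x y h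
  funext v
  rcases v with ⟨c, d⟩
  have hc : (c:ℕ) < m := by omega
  have hd : (d:ℕ) < m := by omega
  have h' := congrFun h ((⟨(c:ℕ), hc⟩ : Fin m), (⟨(d:ℕ), hd⟩ : Fin m))
  rw [tile_apply, tile_apply] at h'
  have hcc : (((⟨(c:ℕ), hc⟩ : Fin m)) : ℤ) = ((c:ℕ) : ℤ) := rfl
  have hdd : (((⟨(d:ℕ), hd⟩ : Fin m)) : ℤ) = ((d:ℕ) : ℤ) := rfl
  have hrc : rho n ((c:ℕ) : ℤ) = ((c:ℕ) : ℤ) := by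
    apply rho_id n _ (by omega)
    have := c.isLt; omega
  have hrd : rho n ((d:ℕ) : ℤ) = ((d:ℕ) : ℤ) := by
    apply rho_id n _ (by omega)
    have := d.isLt; omega
  rw [hcc, hdd, hrc, hrd, ext2_apply (n-1) x c d, ext2_apply (n-1) y c d] at h'
  exact h'


/-- `d n`: the GF(2)-dimension of the kernel of the Lights Out map of the `n × n` grid. -/
noncomputable def gridNullity (n : ℕ) : ℕ :=
  Module.finrank (ZMod 2) (LinearMap.ker (lightsOut (gridGraph n)))

/-- For all `n, k ≥ 1`, `d(nk − 1) ≥ d(n − 1)`. -/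
theorem gridNullity_tiling (n k : ℕ) (hn : 1 ≤ n) (hk : 1 ≤ k) :
    gridNullity (n - 1) ≤ gridNullity (n * k - 1) := by
  rcases eq_or_lt_of_le hn with h1 | h2
  · -- n = 1
    have : n - 1 = 0 := by omega
    rw [this]
    have hempty : IsEmpty (Fin 0 × Fin 0) := by infer_instance
    have : Subsingleton ((Fin 0 × Fin 0) → ZMod 2) := by infer_instance
    have : gridNullity 0 = 0 := by
      have : Subsingleton (LinearMap.ker (lightsOut (gridGraph 0))) := by infer_instance
      exact Module.finrank_zero_of_subsingleton
    omega
  · set m := n * k - 1 with hmdef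
    have hn2 : 2 ≤ n := h2
    have hnk : 1 ≤ n * k := Nat.one_le_iff_ne_zero.mpr (by positivity)
    have hmc : (m:ℤ) = ((n:ℤ) - 1) + (n:ℤ) * ((k:ℤ) - 1) := by
      rw [hmdef]
      push_cast [Nat.cast_sub hnk]
      ring
    have hm : (m:ℤ) % n = (n:ℤ) - 1 := by
      rw [hmc, Int.add_mul_emod_self_left, Int.emod_eq_of_lt (by omega) (by omega)]
    have hker : ∀ x ∈ LinearMap.ker (lightsOut (gridGraph (n-1))),
        tile n m x ∈ LinearMap.ker (lightsOut (gridGraph m)) := by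
      intro x hx
      rw [LinearMap.mem_ker] at hx ⊢
      exact tile_mem_ker n m hn2 hm x hx
    have hinj : Function.Injective ((tile n m).restrict hker) := by
      intro u v huv
      apply Subtype.ext
      apply tile_injective n m hn2 (by
        have : n ≤ n * k := Nat.le_mul_of_pos_right n hk
        omega)
      have := congrArg Subtype.val huv
      simpa [LinearMap.restrict_apply] using this
    exact LinearMap.finrank_le_finrank_of_injective hinj
end

section
/- For every natural number k ≥ 1, the nullity of the (6k − 1) × (6k − 1) grid graph is at least 2; that is, d(6k − 1) ≥ 2. -/
/-- The period-3 sequence `1,1,0,1,1,0,...`. -/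
def fseq (i : ℕ) : ZMod 2 := if i % 3 = 2 then 0 else 1

/-- The period-2 sequence `1,0,1,0,...`. -/
def gseq (j : ℕ) : ZMod 2 := if j % 2 = 0 then 1 else 0

lemma pair_sum {n : ℕ} (h : ℕ → ZMod 2) (j : Fin n) :
    (∑ b : Fin n, (if j.val + 1 = b.val ∨ b.val + 1 = j.val then h b.val else 0)) =
      (if j.val + 1 < n then h (j.val + 1) else 0) +
      (if 1 ≤ j.val then h (j.val - 1) else 0) := by
  have hsplit : ∀ b : Fin n, (if j.val + 1 = b.val ∨ b.val + 1 = j.val then h b.val else 0)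
      = (if j.val + 1 = b.val then h b.val else 0) + (if b.val + 1 = j.val then h b.val else 0) := by
    intro b
    by_cases h1 : j.val + 1 = b.val <;> by_cases h2 : b.val + 1 = j.val <;>
      simp [h1, h2] <;> omega
  rw [Finset.sum_congr rfl (fun b _ => hsplit b), Finset.sum_add_distrib]
  congr 1
  · by_cases hlt : j.val + 1 < n
    · rw [Finset.sum_eq_single (⟨j.val + 1, hlt⟩ : Fin n), if_pos hlt]
      · simp
      · intro b _ hb
        rw [if_neg]
        intro hc
        exact hb (Fin.ext hc.symm)
      · simp
    · rw [if_neg hlt, Finset.sum_eq_zero]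
      intro b _
      rw [if_neg]
      have := b.isLt
      omega
  · by_cases hpos : 1 ≤ j.val
    · have hlt : j.val - 1 < n := by have := j.isLt; omega
      rw [Finset.sum_eq_single (⟨j.val - 1, hlt⟩ : Fin n), if_pos hpos]
      · simp
        omega
      · intro b _ hb
        rw [if_neg]
        intro hc
        apply hb
        apply Fin.ext
        simp
        omega
      · simp
    · rw [if_neg hpos, Finset.sum_eq_zero]
      intro b _
      rw [if_neg]
      omega

lemma grid_ker_mem (n : ℕ) (A B : ℕ → ZMod 2) (cA cB : ZMod 2)
    (hA : ∀ i : Fin n, (if i.val + 1 < n then A (i.val + 1) else 0) +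
        (if 1 ≤ i.val then A (i.val - 1) else 0) = cA * A i.val)
    (hB : ∀ j : Fin n, (if j.val + 1 < n then B (j.val + 1) else 0) +
        (if 1 ≤ j.val then B (j.val - 1) else 0) = cB * B j.val)
    (hc : cA + cB = 1) :
    (fun p : Fin n × Fin n => A p.1.val * B p.2.val) ∈ LinearMap.ker (lightsOut (gridGraph n)) := by
  rw [LinearMap.mem_ker]
  funext v
  obtain ⟨i, j⟩ := v
  show A i.val * B j.val + ∑ u ∈ (gridGraph n).neighborFinset (i, j),
      A u.1.val * B u.2.val = 0
  rw [SimpleGraph.neighborFinset_eq_filter, Finset.sum_filter, Fintype.sum_prod_type]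
  have hterm : ∀ a b : Fin n, (if (gridGraph n).Adj (i, j) (a, b) then A a.val * B b.val else 0)
      = (if i = a then (if j.val + 1 = b.val ∨ b.val + 1 = j.val then A a.val * B b.val else 0) else 0)
      + (if j = b then (if i.val + 1 = a.val ∨ a.val + 1 = i.val then A a.val * B b.val else 0) else 0) := by
    intro a b
    have hadj : (gridGraph n).Adj (i, j) (a, b) ↔
        ((i = a ∧ (j.val + 1 = b.val ∨ b.val + 1 = j.val)) ∨
         (j = b ∧ (i.val + 1 = a.val ∨ a.val + 1 = i.val))) := Iff.rfl
    rw [if_congr hadj rfl rfl]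
    by_cases h1 : i = a <;> by_cases h2 : j = b
    · subst h1; subst h2
      have c3 : ¬ (j.val + 1 = j.val ∨ j.val + 1 = j.val) := by omega
      simp [c3]
    · have c4 : ¬ (i.val + 1 = i.val ∨ i.val + 1 = i.val) := by omega
      simp [h1, h2]
    · have c3 : ¬ (j.val + 1 = j.val ∨ j.val + 1 = j.val) := by omega
      simp [h1, h2]
    · simp [h1, h2]
  rw [Finset.sum_congr rfl fun a _ => Finset.sum_congr rfl fun b _ => hterm a b]
  have hsplit : (∑ a : Fin n, ∑ b : Fin n,
      ((if i = a then (if j.val + 1 = b.val ∨ b.val + 1 = j.val then A a.val * B b.val else 0) else 0)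
      + (if j = b then (if i.val + 1 = a.val ∨ a.val + 1 = i.val then A a.val * B b.val else 0) else 0)))
      = (∑ a : Fin n, ∑ b : Fin n, (if i = a then (if j.val + 1 = b.val ∨ b.val + 1 = j.val then A a.val * B b.val else 0) else 0))
      + (∑ a : Fin n, ∑ b : Fin n, (if j = b then (if i.val + 1 = a.val ∨ a.val + 1 = i.val then A a.val * B b.val else 0) else 0)) := by
    rw [← Finset.sum_add_distrib]
    exact Finset.sum_congr rfl fun a _ => Finset.sum_add_distrib
  rw [hsplit]
  have hS1 : (∑ a : Fin n, ∑ b : Fin n, (if i = a then (if j.val + 1 = b.val ∨ b.val + 1 = j.val then A a.val * B b.val else 0) else 0))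
      = A i.val * (cB * B j.val) := by
    have : ∀ a : Fin n, (∑ b : Fin n, (if i = a then (if j.val + 1 = b.val ∨ b.val + 1 = j.val then A a.val * B b.val else 0) else 0))
        = (if i = a then (∑ b : Fin n, (if j.val + 1 = b.val ∨ b.val + 1 = j.val then A a.val * B b.val else 0)) else 0) := by
      intro a; by_cases h : i = a <;> simp [h]
    rw [Finset.sum_congr rfl fun a _ => this a, Finset.sum_ite_eq]
    simp only [Finset.mem_univ, if_true]
    have : (∑ b : Fin n, (if j.val + 1 = b.val ∨ b.val + 1 = j.val then A i.val * B b.val else 0))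
        = A i.val * (∑ b : Fin n, (if j.val + 1 = b.val ∨ b.val + 1 = j.val then B b.val else 0)) := by
      rw [Finset.mul_sum]
      exact Finset.sum_congr rfl fun b _ => by rw [mul_ite, mul_zero]
    rw [this, pair_sum B j, hB j]
  have hS2 : (∑ a : Fin n, ∑ b : Fin n, (if j = b then (if i.val + 1 = a.val ∨ a.val + 1 = i.val then A a.val * B b.val else 0) else 0))
      = (cA * A i.val) * B j.val := by
    have : ∀ a : Fin n, (∑ b : Fin n, (if j = b then (if i.val + 1 = a.val ∨ a.val + 1 = i.val then A a.val * B b.val else 0) else 0))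
        = (if i.val + 1 = a.val ∨ a.val + 1 = i.val then A a.val * B j.val else 0) := by
      intro a
      rw [Finset.sum_ite_eq]
      simp
    rw [Finset.sum_congr rfl fun a _ => this a]
    have : (∑ a : Fin n, (if i.val + 1 = a.val ∨ a.val + 1 = i.val then A a.val * B j.val else 0))
        = (∑ a : Fin n, (if i.val + 1 = a.val ∨ a.val + 1 = i.val then A a.val else 0)) * B j.val := by
      rw [Finset.sum_mul]
      exact Finset.sum_congr rfl fun a _ => by rw [ite_mul, zero_mul]
    rw [this, pair_sum A i, hA i]
  rw [hS1, hS2]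
  have key : ∀ x y cA cB : ZMod 2, cA + cB = 1 → x * y + (x * (cB * y) + (cA * x) * y) = 0 := by decide
  exact key _ _ _ _ hc

lemma f_rec {n : ℕ} (hn3 : n % 3 = 2) (i : Fin n) :
    (if i.val + 1 < n then fseq (i.val + 1) else 0) +
      (if 1 ≤ i.val then fseq (i.val - 1) else 0) = 1 * fseq i.val := by
  have hi := i.isLt
  rw [one_mul]
  unfold fseq
  by_cases h1 : i.val + 1 < n <;> by_cases h2 : 1 ≤ i.val
  · rw [if_pos h1, if_pos h2]
    have h3 : i.val % 3 = 0 ∨ i.val % 3 = 1 ∨ i.val % 3 = 2 := by omega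
    rcases h3 with h3 | h3 | h3
    · have e2 : (i.val - 1) % 3 = 2 := by omega
      rw [if_neg (by omega), if_pos e2, if_neg (by omega)]; decide
    · have e1 : (i.val + 1) % 3 = 2 := by omega
      rw [if_pos e1, if_neg (by omega), if_neg (by omega)]; decide
    · rw [if_neg (by omega), if_neg (by omega), if_pos h3]; decide
  · have h0 : i.val = 0 := by omega
    rw [if_pos h1, if_neg h2, h0]
    rw [if_neg (by omega), if_neg (by norm_num)]; decide
  · rw [if_neg h1, if_pos h2, if_neg (by omega), if_neg (by omega)]; decide
  · omega

lemma g_rec {n : ℕ} (hn2 : n % 2 = 1) (j : Fin n) :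
    (if j.val + 1 < n then gseq (j.val + 1) else 0) +
      (if 1 ≤ j.val then gseq (j.val - 1) else 0) = 0 * gseq j.val := by
  have hj := j.isLt
  rw [zero_mul]
  unfold gseq
  by_cases h1 : j.val + 1 < n <;> by_cases h2 : 1 ≤ j.val
  · rw [if_pos h1, if_pos h2]
    rcases Nat.even_or_odd j.val with h | h
    · have e1 : ¬ (j.val + 1) % 2 = 0 := by rcases h with ⟨m, hm⟩; omega
      have e2 : ¬ (j.val - 1) % 2 = 0 := by rcases h with ⟨m, hm⟩; omega
      rw [if_neg e1, if_neg e2]; decide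
    · have e1 : (j.val + 1) % 2 = 0 := by rcases h with ⟨m, hm⟩; omega
      have e2 : (j.val - 1) % 2 = 0 := by rcases h with ⟨m, hm⟩; omega
      rw [if_pos e1, if_pos e2]; decide
  · have h0 : j.val = 0 := by omega
    rw [if_pos h1, if_neg h2, h0]
    rw [if_neg (by norm_num)]; decide
  · have e2 : ¬ (j.val - 1) % 2 = 0 := by omega
    rw [if_neg h1, if_pos h2, if_neg e2]; decide
  · rw [if_neg h1, if_neg h2]; decide

/-- For every `k ≥ 1`, the nullity of the `(6k − 1) × (6k − 1)` grid graph is at least 2. -/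
theorem gridNullity_six_k_sub_one (k : ℕ) (hk : 1 ≤ k) :
    2 ≤ gridNullity (6 * k - 1) := by
  set n := 6 * k - 1 with hn
  have hn2 : n % 2 = 1 := by omega
  have hn3 : n % 3 = 2 := by omega
  have hn5 : 5 ≤ n := by omega
  have h1 : (fun p : Fin n × Fin n => fseq p.1.val * gseq p.2.val) ∈
      LinearMap.ker (lightsOut (gridGraph n)) :=
    grid_ker_mem n fseq gseq 1 0 (f_rec hn3) (g_rec hn2) (by decide)
  have h2 : (fun p : Fin n × Fin n => gseq p.1.val * fseq p.2.val) ∈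
      LinearMap.ker (lightsOut (gridGraph n)) :=
    grid_ker_mem n gseq fseq 0 1 (g_rec hn2) (f_rec hn3) (by decide)
  set K := LinearMap.ker (lightsOut (gridGraph n))
  set x1 : K := ⟨_, h1⟩
  set x2 : K := ⟨_, h2⟩
  have p00 : Fin n × Fin n := (⟨0, by omega⟩, ⟨0, by omega⟩)
  have hind : LinearIndependent (ZMod 2) ![x1, x2] := by
    rw [linearIndependent_fin2]
    constructor
    · -- x2 ≠ 0
      intro hx
      have := congrFun (congrArg Subtype.val hx) (⟨0, by omega⟩, ⟨1, by omega⟩)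
      simp [x2, fseq, gseq] at this
    · intro a hx
      have h01 := congrFun (congrArg Subtype.val hx) (⟨0, by omega⟩, ⟨1, by omega⟩)
      have h00 := congrFun (congrArg Subtype.val hx) (⟨0, by omega⟩, ⟨0, by omega⟩)
      simp [x1, x2, fseq, gseq] at h01 h00
      -- h01 : a * (gseq 0 * fseq 1) = fseq 0 * gseq 1, etc.
      rw [h00] at h01
      exact absurd h01 (by decide)
  have := hind.fintype_card_le_finrank
  simpa [gridNullity] using this
end

section
/- For every natural number k ≥ 1, the answer to the Most Clicks Problem on the (6k − 1) × (6k − 1) grid graph is at most 26k² − 12k + 1. That is, for every configuration b in the range of the Lights Out map Φ of the (6k − 1) × (6k − 1) grid graph, there exists x with Φ(x) = b whose Hamming weight is at most 26k² − 12k + 1. -/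
def Fp (n : ℕ) (a : Fin n) : ZMod 2 := if a.val % 3 = 2 then 0 else 1
def Gp (n : ℕ) (a : Fin n) : ZMod 2 := if a.val % 2 = 0 then 1 else 0

lemma ite_or_zero {p q : Prop} [Decidable p] [Decidable q] (h : ¬(p ∧ q)) (t : ZMod 2) :
    (if p ∨ q then t else 0) = (if p then t else 0) + (if q then t else 0) := by
  by_cases hp : p <;> by_cases hq : q
  · exact absurd ⟨hp, hq⟩ h
  · simp [hp, hq]
  · simp [hp, hq]
  · simp [hp, hq]

lemma card_filter_succ (p : ℕ → Prop) [DecidablePred p] (N : ℕ) :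
    ((Finset.range (N+1)).filter p).card
      = ((Finset.range N).filter p).card + (if p N then 1 else 0) := by
  rw [Finset.range_add_one, Finset.filter_insert]
  split_ifs with h
  · rw [Finset.card_insert_of_notMem (by simp)]
  · simp

lemma rF : ∀ m : ℕ, ((Finset.range (6*m+5)).filter fun i => ¬ i % 3 = 2).card = 4*m+4 := by
  intro m
  induction m with
  | zero => decide
  | succ m ih =>
      have e : 6*(m+1)+5 = (6*m+5)+1+1+1+1+1+1 := by ring
      rw [e, card_filter_succ, card_filter_succ, card_filter_succ, card_filter_succ,
        card_filter_succ, card_filter_succ, ih]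
      split_ifs <;> omega

lemma rG : ∀ m : ℕ, ((Finset.range (6*m+5)).filter fun i => i % 2 = 0).card = 3*m+3 := by
  intro m
  induction m with
  | zero => decide
  | succ m ih =>
      have e : 6*(m+1)+5 = (6*m+5)+1+1+1+1+1+1 := by ring
      rw [e, card_filter_succ, card_filter_succ, card_filter_succ, card_filter_succ,
        card_filter_succ, card_filter_succ, ih]
      split_ifs <;> omega

lemma rFG : ∀ m : ℕ, ((Finset.range (6*m+5)).filter fun i => (¬ i % 3 = 2) ∧ i % 2 = 0).card = 2*m+2 := by
  intro m
  induction m with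
  | zero => decide
  | succ m ih =>
      have e : 6*(m+1)+5 = (6*m+5)+1+1+1+1+1+1 := by ring
      rw [e, card_filter_succ, card_filter_succ, card_filter_succ, card_filter_succ,
        card_filter_succ, card_filter_succ, ih]
      split_ifs <;> omega

lemma finCard {n : ℕ} {p : Fin n → Prop} [DecidablePred p] (q : ℕ → Prop) [DecidablePred q]
    (h : ∀ a : Fin n, p a ↔ q a.val) :
    (Finset.univ.filter p).card = ((Finset.range n).filter q).card := by
  rw [Finset.card_filter, Finset.card_filter,
    ← Fin.sum_univ_eq_sum_range (fun i => if q i then 1 else 0) n]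
  exact Finset.sum_congr rfl fun a _ => by simp [h a]

lemma nbrSum {n : ℕ} (x : Fin n × Fin n → ZMod 2) (v : Fin n × Fin n) :
    ∑ u ∈ (gridGraph n).neighborFinset v, x u =
      (∑ a : Fin n, if v.1.val + 1 = a.val ∨ a.val + 1 = v.1.val then x (a, v.2) else 0) +
      (∑ b : Fin n, if v.2.val + 1 = b.val ∨ b.val + 1 = v.2.val then x (v.1, b) else 0) := by
  rw [SimpleGraph.neighborFinset_eq_filter, Finset.sum_filter, Fintype.sum_prod_type]
  have key : ∀ a b : Fin n, (if (gridGraph n).Adj v (a, b) then x (a, b) else 0) =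
      (if (v.1.val + 1 = a.val ∨ a.val + 1 = v.1.val) ∧ v.2 = b then x (a, b) else 0) +
      (if v.1 = a ∧ (v.2.val + 1 = b.val ∨ b.val + 1 = v.2.val) then x (a, b) else 0) := by
    intro a b
    have hiff : (gridGraph n).Adj v (a, b) ↔
        (((v.1.val + 1 = a.val ∨ a.val + 1 = v.1.val) ∧ v.2 = b) ∨
          (v.1 = a ∧ (v.2.val + 1 = b.val ∨ b.val + 1 = v.2.val))) := by
      show ((v.1 = a ∧ _) ∨ (v.2 = b ∧ _)) ↔ _
      tauto
    rw [if_congr hiff rfl rfl]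
    apply ite_or_zero
    rintro ⟨⟨hca, h2⟩, ⟨h1, hcb⟩⟩
    have := congrArg Fin.val h1
    omega
  simp only [key]
  simp only [Finset.sum_add_distrib]
  congr 1
  · refine Finset.sum_congr rfl fun a _ => ?_
    by_cases h : v.1.val + 1 = a.val ∨ a.val + 1 = v.1.val
    · simp [h, Finset.sum_ite_eq]
    · simp [h]
  · have t2 : ∀ a : Fin n, (∑ b : Fin n,
        if v.1 = a ∧ (v.2.val + 1 = b.val ∨ b.val + 1 = v.2.val) then x (a, b) else 0)
        = if v.1 = a then (∑ b : Fin n,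
            if v.2.val + 1 = b.val ∨ b.val + 1 = v.2.val then x (a, b) else 0) else 0 := by
      intro a
      by_cases h : v.1 = a <;> simp [h]
    simp only [t2]
    rw [Finset.sum_ite_eq]
    simp

lemma sum_split {n : ℕ} (f : Fin n → ZMod 2) (c1 c2 : Fin n → Prop) [DecidablePred c1]
    [DecidablePred c2] (h : ∀ a, ¬ (c1 a ∧ c2 a)) :
    (∑ a : Fin n, if c1 a ∨ c2 a then f a else 0)
      = (∑ a : Fin n, if c1 a then f a else 0) + (∑ a : Fin n, if c2 a then f a else 0) := by
  rw [← Finset.sum_add_distrib]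
  exact Finset.sum_congr rfl fun a _ => ite_or_zero (h a) _

lemma sum_pick {n : ℕ} (c : ℕ) (f : Fin n → ZMod 2) :
    (∑ a : Fin n, if c = a.val then f a else 0) = if h : c < n then f ⟨c, h⟩ else 0 := by
  split_ifs with h
  · rw [Finset.sum_eq_single ⟨c, h⟩]
    · rw [if_pos rfl]
    · intro b _ hb
      rw [if_neg]
      intro hc
      exact hb (Fin.ext hc.symm)
    · intro habs
      exact absurd (Finset.mem_univ _) habs
  · apply Finset.sum_eq_zero
    intro b _
    rw [if_neg]
    intro hc
    exact h (hc ▸ b.isLt)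

lemma SF {n : ℕ} (hn : n % 6 = 5) (i : Fin n) :
    (∑ a : Fin n, if i.val + 1 = a.val ∨ a.val + 1 = i.val then Fp n a else 0) = Fp n i := by
  have hi := i.isLt
  rw [sum_split _ _ _ (fun a => by omega)]
  have h1 : (∑ a : Fin n, if i.val + 1 = a.val then Fp n a else 0)
      = if h : i.val + 1 < n then Fp n ⟨i.val + 1, h⟩ else 0 := sum_pick _ _
  have h2 : (∑ a : Fin n, if a.val + 1 = i.val then Fp n a else 0)
      = if h : 1 ≤ i.val then Fp n ⟨i.val - 1, by omega⟩ else 0 := by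
    split_ifs with h
    · rw [Finset.sum_eq_single ⟨i.val - 1, by omega⟩]
      · rw [if_pos (by simp; omega)]
      · intro b _ hb
        rw [if_neg]
        intro hc
        exact hb (Fin.ext (by simp; omega))
      · intro habs
        exact absurd (Finset.mem_univ _) habs
    · apply Finset.sum_eq_zero
      intro b _
      rw [if_neg]
      omega
  rw [h1, h2]
  unfold Fp
  split_ifs <;> first | rfl | decide | omega | (simp only [] at *; omega)

lemma SG {n : ℕ} (hn : n % 6 = 5) (j : Fin n) :
    (∑ b : Fin n, if j.val + 1 = b.val ∨ b.val + 1 = j.val then Gp n b else 0) = 0 := by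
  have hj := j.isLt
  rw [sum_split _ _ _ (fun a => by omega)]
  have h1 : (∑ b : Fin n, if j.val + 1 = b.val then Gp n b else 0)
      = if h : j.val + 1 < n then Gp n ⟨j.val + 1, h⟩ else 0 := sum_pick _ _
  have h2 : (∑ b : Fin n, if b.val + 1 = j.val then Gp n b else 0)
      = if h : 1 ≤ j.val then Gp n ⟨j.val - 1, by omega⟩ else 0 := by
    split_ifs with h
    · rw [Finset.sum_eq_single ⟨j.val - 1, by omega⟩]
      · rw [if_pos (by simp; omega)]
      · intro b _ hb
        rw [if_neg]
        intro hc
        exact hb (Fin.ext (by simp; omega))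
      · intro habs
        exact absurd (Finset.mem_univ _) habs
    · apply Finset.sum_eq_zero
      intro b _
      rw [if_neg]
      omega
  rw [h1, h2]
  unfold Gp
  split_ifs <;> first | rfl | decide | omega | (simp only [] at *; omega)

lemma quiet1 {n : ℕ} (hn : n % 6 = 5) :
    lightsOut (gridGraph n) (fun v => Fp n v.1 * Gp n v.2) = 0 := by
  funext v
  rw [Pi.zero_apply, lightsOut_apply, nbrSum]
  have h1 : (∑ a : Fin n, if v.1.val + 1 = a.val ∨ a.val + 1 = v.1.val
        then Fp n a * Gp n v.2 else 0)
      = (∑ a : Fin n, if v.1.val + 1 = a.val ∨ a.val + 1 = v.1.val then Fp n a else 0)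
          * Gp n v.2 := by
    rw [Finset.sum_mul]
    refine Finset.sum_congr rfl fun a _ => ?_
    rw [ite_mul, zero_mul]
  have h2 : (∑ b : Fin n, if v.2.val + 1 = b.val ∨ b.val + 1 = v.2.val
        then Fp n v.1 * Gp n b else 0)
      = Fp n v.1 * ∑ b : Fin n, (if v.2.val + 1 = b.val ∨ b.val + 1 = v.2.val
          then Gp n b else 0) := by
    rw [Finset.mul_sum]
    refine Finset.sum_congr rfl fun b _ => ?_
    rw [mul_ite, mul_zero]
  rw [h1, h2, SF hn, SG hn, mul_zero, add_zero, CharTwo.add_self_eq_zero]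

lemma quiet2 {n : ℕ} (hn : n % 6 = 5) :
    lightsOut (gridGraph n) (fun v => Gp n v.1 * Fp n v.2) = 0 := by
  funext v
  rw [Pi.zero_apply, lightsOut_apply, nbrSum]
  have h1 : (∑ a : Fin n, if v.1.val + 1 = a.val ∨ a.val + 1 = v.1.val
        then Gp n a * Fp n v.2 else 0)
      = (∑ a : Fin n, if v.1.val + 1 = a.val ∨ a.val + 1 = v.1.val then Gp n a else 0)
          * Fp n v.2 := by
    rw [Finset.sum_mul]
    refine Finset.sum_congr rfl fun a _ => ?_
    rw [ite_mul, zero_mul]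
  have h2 : (∑ b : Fin n, if v.2.val + 1 = b.val ∨ b.val + 1 = v.2.val
        then Gp n v.1 * Fp n b else 0)
      = Gp n v.1 * ∑ b : Fin n, (if v.2.val + 1 = b.val ∨ b.val + 1 = v.2.val
          then Fp n b else 0) := by
    rw [Finset.mul_sum]
    refine Finset.sum_congr rfl fun b _ => ?_
    rw [mul_ite, mul_zero]
  rw [h1, h2, SF hn, SG hn, zero_mul, zero_add, CharTwo.add_self_eq_zero]

set_option maxHeartbeats 1000000 in
/-- For every `k ≥ 1`, every solvable configuration on the `(6k − 1) × (6k − 1)` grid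
has a solution of Hamming weight at most `26k² − 12k + 1`. -/
theorem mcp_upper_bound (k : ℕ) (hk : 1 ≤ k)
    (b : Fin (6 * k - 1) × Fin (6 * k - 1) → ZMod 2)
    (hb : b ∈ LinearMap.range (lightsOut (gridGraph (6 * k - 1)))) :
    ∃ x, lightsOut (gridGraph (6 * k - 1)) x = b ∧
      hammingWeight x ≤ 26 * k ^ 2 - 12 * k + 1 := by
  obtain ⟨m, rfl⟩ : ∃ m, k = m + 1 := ⟨k - 1, by omega⟩
  have hn : (6 * (m + 1) - 1) % 6 = 5 := by omega
  generalize hgen : 6 * (m + 1) - 1 = n at *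
  have hn5 : n = 6 * m + 5 := by omega
  obtain ⟨x0, hx0⟩ := hb
  set q1 : Fin n × Fin n → ZMod 2 := fun v => Fp n v.1 * Gp n v.2 with hq1
  set q2 : Fin n × Fin n → ZMod 2 := fun v => Gp n v.1 * Fp n v.2 with hq2
  have sol : ∀ j : Fin n × Fin n → ZMod 2, lightsOut (gridGraph n) j = 0 →
      lightsOut (gridGraph n) (x0 + j) = b := by
    intro j hj
    rw [map_add, hj, add_zero, hx0]
  have hq1z : lightsOut (gridGraph n) q1 = 0 := quiet1 hn
  have hq2z : lightsOut (gridGraph n) q2 = 0 := quiet2 hn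
  have hq12 : lightsOut (gridGraph n) (q1 + q2) = 0 := by
    rw [map_add, hq1z, hq2z, add_zero]
  have hWdef : ∀ x : Fin n × Fin n → ZMod 2,
      hammingWeight x = ∑ v : Fin n × Fin n, (if x v = 1 then 1 else 0) :=
    fun x => Finset.card_filter _ _
  set W0 := hammingWeight x0 with hW0
  set W1 := hammingWeight (x0 + q1) with hW1
  set W2 := hammingWeight (x0 + q2) with hW2
  set W3 := hammingWeight (x0 + (q1 + q2)) with hW3
  set S := (Finset.univ.filter fun v : Fin n × Fin n => q1 v = 1 ∨ q2 v = 1).card with hSdef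
  have hz : ∀ z : ZMod 2, z = 0 ∨ z = 1 := by decide
  have hsum : (∑ v : Fin n × Fin n,
        ((if x0 v = 1 then (1:ℕ) else 0) + (if (x0 + q1) v = 1 then 1 else 0)
          + (if (x0 + q2) v = 1 then 1 else 0) + (if (x0 + (q1 + q2)) v = 1 then 1 else 0)
          + 2 * (if q1 v = 1 ∨ q2 v = 1 then 1 else 0)))
      = W0 + W1 + W2 + W3 + 2 * S := by
    simp only [Finset.sum_add_distrib, ← Finset.mul_sum]
    rw [← hWdef x0, ← hWdef (x0 + q1), ← hWdef (x0 + q2), ← hWdef (x0 + (q1 + q2))]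
    rw [hSdef, Finset.card_filter]
  have key : W0 + W1 + W2 + W3 + 2 * S ≤ (n * n) * 4 := by
    rw [← hsum]
    calc (∑ v : Fin n × Fin n,
        ((if x0 v = 1 then (1:ℕ) else 0) + (if (x0 + q1) v = 1 then 1 else 0)
          + (if (x0 + q2) v = 1 then 1 else 0) + (if (x0 + (q1 + q2)) v = 1 then 1 else 0)
          + 2 * (if q1 v = 1 ∨ q2 v = 1 then 1 else 0)))
        ≤ ∑ _v : Fin n × Fin n, 4 := by
          refine Finset.sum_le_sum fun v _ => ?_
          simp only [Pi.add_apply]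
          rcases hz (x0 v) with h | h <;> rcases hz (q1 v) with h1 | h1 <;>
            rcases hz (q2 v) with h2 | h2 <;> simp only [h, h1, h2] <;> decide
      _ = (n * n) * 4 := by
          rw [Finset.sum_const, Finset.card_univ, Fintype.card_prod, Fintype.card_fin,
            smul_eq_mul]
  have hq1iff : ∀ v : Fin n × Fin n, (q1 v = 1) ↔ ((¬ v.1.val % 3 = 2) ∧ v.2.val % 2 = 0) := by
    intro v
    simp only [hq1, Fp, Gp]
    by_cases hA : v.1.val % 3 = 2 <;> by_cases hB : v.2.val % 2 = 0 <;>
      simp [hA, hB]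
  have hq2iff : ∀ v : Fin n × Fin n, (q2 v = 1) ↔ (v.1.val % 2 = 0 ∧ ¬ v.2.val % 3 = 2) := by
    intro v
    simp only [hq2, Fp, Gp]
    by_cases hA : v.1.val % 2 = 0 <;> by_cases hB : v.2.val % 3 = 2 <;>
      simp [hA, hB]
  have hAc : (Finset.univ.filter fun v : Fin n × Fin n => q1 v = 1).card
      = (4*m+4) * (3*m+3) := by
    rw [Finset.filter_congr (fun v _ => hq1iff v)]
    rw [show (Finset.univ : Finset (Fin n × Fin n)) = Finset.univ ×ˢ Finset.univ from
      (Finset.univ_product_univ).symm]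
    rw [Finset.filter_product (fun a : Fin n => ¬ a.val % 3 = 2)
      (fun b : Fin n => b.val % 2 = 0), Finset.card_product]
    rw [finCard (p := fun a : Fin n => ¬ a.val % 3 = 2) (fun i => ¬ i % 3 = 2) (fun a => Iff.rfl),
      finCard (p := fun a : Fin n => a.val % 2 = 0) (fun i => i % 2 = 0) (fun a => Iff.rfl),
      hn5, rF, rG]
  have hBc : (Finset.univ.filter fun v : Fin n × Fin n => q2 v = 1).card
      = (3*m+3) * (4*m+4) := by
    rw [Finset.filter_congr (fun v _ => hq2iff v)]
    rw [show (Finset.univ : Finset (Fin n × Fin n)) = Finset.univ ×ˢ Finset.univ from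
      (Finset.univ_product_univ).symm]
    rw [Finset.filter_product (fun a : Fin n => a.val % 2 = 0)
      (fun b : Fin n => ¬ b.val % 3 = 2), Finset.card_product]
    rw [finCard (p := fun a : Fin n => a.val % 2 = 0) (fun i => i % 2 = 0) (fun a => Iff.rfl),
      finCard (p := fun a : Fin n => ¬ a.val % 3 = 2) (fun i => ¬ i % 3 = 2) (fun a => Iff.rfl),
      hn5, rF, rG]
  have hABiff : ∀ v : Fin n × Fin n, (q1 v = 1 ∧ q2 v = 1) ↔
      (((¬ v.1.val % 3 = 2) ∧ v.1.val % 2 = 0) ∧ ((¬ v.2.val % 3 = 2) ∧ v.2.val % 2 = 0)) := by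
    intro v
    rw [hq1iff v, hq2iff v]
    tauto
  have hABc : (Finset.univ.filter fun v : Fin n × Fin n => q1 v = 1 ∧ q2 v = 1).card
      = (2*m+2) * (2*m+2) := by
    rw [Finset.filter_congr (fun v _ => hABiff v)]
    rw [show (Finset.univ : Finset (Fin n × Fin n)) = Finset.univ ×ˢ Finset.univ from
      (Finset.univ_product_univ).symm]
    rw [Finset.filter_product (fun a : Fin n => (¬ a.val % 3 = 2) ∧ a.val % 2 = 0)
      (fun b : Fin n => (¬ b.val % 3 = 2) ∧ b.val % 2 = 0), Finset.card_product]
    rw [finCard (p := fun a : Fin n => (¬ a.val % 3 = 2) ∧ a.val % 2 = 0)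
        (fun i => (¬ i % 3 = 2) ∧ i % 2 = 0) (fun a => Iff.rfl), hn5, rFG]
  have hS : S + (2*m+2)*(2*m+2) = (4*m+4)*(3*m+3) + (3*m+3)*(4*m+4) := by
    have hu := Finset.card_union_add_card_inter
      (Finset.univ.filter fun v : Fin n × Fin n => q1 v = 1)
      (Finset.univ.filter fun v : Fin n × Fin n => q2 v = 1)
    rw [← Finset.filter_or, ← Finset.filter_and, hAc, hBc, hABc] at hu
    rw [hSdef]
    exact hu
  have e2 : (n*n)*4 = 144*(m*m) + 240*m + 100 := by rw [hn5]; ring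
  have e3 : (2*m+2)*(2*m+2) = 4*(m*m)+8*m+4 := by ring
  have e4 : (4*m+4)*(3*m+3) = 12*(m*m)+24*m+12 := by ring
  have e5 : (3*m+3)*(4*m+4) = 12*(m*m)+24*m+12 := by ring
  rw [e2] at key
  rw [e3, e4, e5] at hS
  have ebound : 26 * (m+1)^2 - 12*(m+1) + 1 = 26*(m*m) + 40*m + 15 := by
    have h1 : (m+1)^2 = m*m + 2*m + 1 := by ring
    rw [h1]
    generalize m*m = M
    omega
  rw [ebound]
  have hd : W0 ≤ 26*(m*m)+40*m+15 ∨ W1 ≤ 26*(m*m)+40*m+15 ∨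
      W2 ≤ 26*(m*m)+40*m+15 ∨ W3 ≤ 26*(m*m)+40*m+15 := by
    generalize m*m = M at key hS
    omega
  rcases hd with h | h | h | h
  · exact ⟨x0, hx0, h⟩
  · exact ⟨x0 + q1, sol q1 hq1z, h⟩
  · exact ⟨x0 + q2, sol q2 hq2z, h⟩
  · exact ⟨x0 + (q1 + q2), sol (q1 + q2) hq12, h⟩
end

section
/- Let d(n) denote the GF(2)-dimension of the kernel of the Lights Out map of the n × n grid graph. If d(n) = 2, then n is odd. -/
open Polynomial Module Finset

noncomputable def fibP : ℕ → Polynomial (ZMod 2)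
  | 0 => 0
  | 1 => 1
  | (k+2) => X * fibP (k+1) + fibP k

lemma fibP_zero : fibP 0 = 0 := rfl
lemma fibP_one : fibP 1 = 1 := rfl
lemma fibP_add_two (k : ℕ) : fibP (k+2) = X * fibP (k+1) + fibP k := rfl

lemma fibP_add (m : ℕ) : ∀ j, fibP (m + j + 1) = fibP (m+1) * fibP (j+1) + fibP m * fibP j := by
  have key : ∀ j, (fibP (m + j + 1) = fibP (m+1) * fibP (j+1) + fibP m * fibP j) ∧
      (fibP (m + (j+1) + 1) = fibP (m+1) * fibP (j+2) + fibP m * fibP (j+1)) := by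
    intro j
    induction j with
    | zero => simp [fibP_one, fibP_zero, fibP_add_two]; ring
    | succ k ih =>
      refine ⟨ih.2, ?_⟩
      have h1 : m + (k + 1 + 1) + 1 = (m + k + 1) + 2 := by ring
      have h2 : m + (k + 1) + 1 = (m + k + 1) + 1 := by ring
      have i2 := ih.2
      rw [h2] at i2
      rw [h1, fibP_add_two, i2, ih.1]
      rw [fibP_add_two (k+1), fibP_add_two k]
      ring
  exact fun j => (key j).1

lemma fibP_sq (k : ℕ) : fibP (2 * k + 1) = (fibP (k+1) + fibP k) ^ 2 := by
  have h := fibP_add k k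
  have h2 : 2 * k + 1 = k + k + 1 := by ring
  rw [h2, h]
  have : ∀ a b : Polynomial (ZMod 2), (a + b)^2 = a^2 + b^2 := by
    intro a b
    rw [add_pow_char]
  rw [this]
  ring

lemma fibP_monic_degree : ∀ k, (fibP (k+1)).Monic ∧ (fibP (k+1)).degree = k ∧ (fibP k).degree < k := by
  intro k
  induction k with
  | zero => refine ⟨monic_one, ?_, ?_⟩ <;> simp [fibP_one, fibP_zero]
  | succ k ih =>
    obtain ⟨hm, hd, hlt⟩ := ih
    have hXm : (X * fibP (k+1)).Monic := (monic_X.mul hm)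
    have hXd : (X * fibP (k+1)).degree = ((k+1 : ℕ) : WithBot ℕ) := by
      rw [degree_mul, degree_X, hd]
      rw [← Nat.cast_one, ← Nat.cast_add, Nat.add_comm]
    have hlt2 : (fibP k).degree < (X * fibP (k+1)).degree := by
      rw [hXd]; exact lt_trans hlt (by exact_mod_cast Nat.lt_succ_self k)
    refine ⟨?_, ?_, ?_⟩
    · rw [fibP_add_two]
      exact hXm.add_of_left hlt2
    · rw [fibP_add_two, degree_add_eq_left_of_degree_lt hlt2, hXd]
    · rw [hd]; exact_mod_cast Nat.lt_succ_self k

lemma fibP_ne_zero (k : ℕ) : fibP (k+1) ≠ 0 := (fibP_monic_degree k).1.ne_zero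
lemma fibP_natDegree (k : ℕ) : (fibP (k+1)).natDegree = k :=
  natDegree_eq_of_degree_eq_some (fibP_monic_degree k).2.1


/-- The path "adjacency sum" operator on `Fin n → ZMod 2`. -/
noncomputable def pathOp (n : ℕ) : (Fin n → ZMod 2) →ₗ[ZMod 2] (Fin n → ZMod 2) where
  toFun w := fun j => ∑ b : Fin n, if (j.val + 1 = b.val ∨ b.val + 1 = j.val) then w b else 0
  map_add' w u := by
    funext j
    simp only [Pi.add_apply]
    rw [← Finset.sum_add_distrib]
    refine Finset.sum_congr rfl fun b _ => ?_
    split <;> simp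
  map_smul' c w := by
    funext j
    simp only [Pi.smul_apply, smul_eq_mul]
    rw [Finset.mul_sum]
    refine Finset.sum_congr rfl fun b _ => ?_
    split <;> simp

lemma pathOp_apply (n : ℕ) (w : Fin n → ZMod 2) (j : Fin n) :
    pathOp n w j = ∑ b : Fin n, if (j.val + 1 = b.val ∨ b.val + 1 = j.val) then w b else 0 := rfl

-- splitting an ite over a disjoint disjunction
lemma ite_or_disjoint {M : Type*} [AddZeroClass M] (p q : Prop) [Decidable p] [Decidable q]
    (h : ¬(p ∧ q)) (t : M) :
    (if p ∨ q then t else 0) = (if p then t else 0) + (if q then t else 0) := by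
  by_cases hp : p <;> by_cases hq : q <;> simp [hp, hq, h]
  · exact absurd ⟨hp, hq⟩ h

lemma lightsOut_grid_apply (n : ℕ) (x : Fin n × Fin n → ZMod 2) (i j : Fin n) :
    lightsOut (gridGraph n) x (i, j)
      = x (i, j) + pathOp n (fun b => x (i, b)) j + pathOp n (fun a => x (a, j)) i := by
  show x (i,j) + ∑ u ∈ (gridGraph n).neighborFinset (i,j), x u = _
  have h1 : ∑ u ∈ (gridGraph n).neighborFinset (i,j), x u
      = ∑ u : Fin n × Fin n, if (gridGraph n).Adj (i,j) u then x u else 0 := by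
    rw [SimpleGraph.neighborFinset_eq_filter, Finset.sum_filter]
  rw [h1, add_assoc]
  congr 1
  rw [Fintype.sum_prod_type]
  have h2 : ∀ (a b : Fin n), (if (gridGraph n).Adj (i,j) (a,b) then x (a,b) else 0)
      = (if i = a ∧ (j.val + 1 = b.val ∨ b.val + 1 = j.val) then x (a,b) else 0)
      + (if j = b ∧ (i.val + 1 = a.val ∨ a.val + 1 = i.val) then x (a,b) else 0) := by
    intro a b
    have : (gridGraph n).Adj (i,j) (a,b) ↔
        ((i = a ∧ (j.val + 1 = b.val ∨ b.val + 1 = j.val)) ∨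
         (j = b ∧ (i.val + 1 = a.val ∨ a.val + 1 = i.val))) := Iff.rfl
    rw [if_congr this rfl rfl]
    refine ite_or_disjoint _ _ ?_ _
    rintro ⟨⟨-, h2⟩, ⟨h3, -⟩⟩
    have := Fin.val_eq_val j b
    omega
  simp_rw [h2, Finset.sum_add_distrib]
  congr 1
  · -- row part
    rw [pathOp_apply]
    rw [Finset.sum_comm]
    refine Finset.sum_congr rfl fun b _ => ?_
    simp_rw [ite_and]
    rw [Finset.sum_ite_eq (Finset.univ : Finset (Fin n)) i
      (fun a => if (j.val + 1 = b.val ∨ b.val + 1 = j.val) then x (a,b) else 0)]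
    simp
  · -- column part
    rw [pathOp_apply]
    refine Finset.sum_congr rfl fun a _ => ?_
    simp_rw [ite_and]
    rw [Finset.sum_ite_eq (Finset.univ : Finset (Fin n)) j
      (fun b => if (i.val + 1 = a.val ∨ a.val + 1 = i.val) then x (a,b) else 0)]
    simp

lemma add_self_pi {n : ℕ} (w : Fin n → ZMod 2) : w + w = 0 := by
  funext j
  exact CharTwo.add_self_eq_zero _

lemma sum_nbr (n : ℕ) (w : Fin n → ZMod 2) (K : ℕ) :
    (∑ a : Fin n, if (K + 1 = a.val ∨ a.val + 1 = K) then w a else 0)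
      = (if h : K + 1 < n then w ⟨K+1, h⟩ else 0)
      + (if h : 0 < K ∧ K - 1 < n then w ⟨K-1, h.2⟩ else 0) := by
  have hsplit : ∀ a : Fin n, (if (K + 1 = a.val ∨ a.val + 1 = K) then w a else 0)
      = (if K + 1 = a.val then w a else 0) + (if a.val + 1 = K then w a else 0) := by
    intro a
    refine ite_or_disjoint _ _ ?_ _
    rintro ⟨h1, h2⟩; omega
  simp_rw [hsplit]
  rw [Finset.sum_add_distrib]
  congr 1
  · by_cases h : K + 1 < n
    · rw [dif_pos h]
      have : ∀ a : Fin n, (K + 1 = a.val) ↔ ((⟨K+1, h⟩ : Fin n) = a) := by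
        intro a; rw [Fin.ext_iff]
      simp_rw [this]
      rw [Finset.sum_ite_eq]; simp
    · rw [dif_neg h]
      refine Finset.sum_eq_zero fun a _ => ?_
      rw [if_neg]; omega
  · by_cases h : 0 < K ∧ K - 1 < n
    · rw [dif_pos h]
      have : ∀ a : Fin n, (a.val + 1 = K) ↔ ((⟨K-1, h.2⟩ : Fin n) = a) := by
        intro a; rw [Fin.ext_iff]; simp; omega
      simp_rw [this]
      rw [Finset.sum_ite_eq]; simp
    · rw [dif_neg h]
      refine Finset.sum_eq_zero fun a _ => ?_
      rw [if_neg]; omega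

/-- The operator `B = 1 + P`. -/
noncomputable def Bop (n : ℕ) : Module.End (ZMod 2) (Fin n → ZMod 2) := 1 + pathOp n

lemma Bop_apply (n : ℕ) (w : Fin n → ZMod 2) (j : Fin n) :
    Bop n w j = w j + pathOp n w j := rfl

lemma char2_End (n : ℕ) : (1 : Module.End (ZMod 2) (Fin n → ZMod 2)) + 1 = 0 := by
  apply LinearMap.ext
  intro w
  funext j
  show w j + w j = 0
  exact CharTwo.add_self_eq_zero _

lemma aeval_Bop_X_add_one (n : ℕ) :
    aeval (Bop n) (X + 1 : Polynomial (ZMod 2)) = pathOp n := by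
  rw [map_add, aeval_X, map_one, Bop, add_assoc, add_comm (pathOp n : Module.End (ZMod 2) _) 1,
    ← add_assoc, char2_End, zero_add]

lemma aeval_Bop_comp (n : ℕ) (g : Polynomial (ZMod 2)) :
    aeval (Bop n) (g.comp (X + 1)) = aeval (pathOp n) g := by
  rw [aeval_comp, aeval_Bop_X_add_one]

lemma pathOp_single (n : ℕ) (c j : Fin n) :
    pathOp n (Pi.single c 1) j = if (j.val + 1 = c.val ∨ c.val + 1 = j.val) then 1 else 0 := by
  rw [pathOp_apply]
  have : ∀ b : Fin n, (if (j.val + 1 = b.val ∨ b.val + 1 = j.val) then (Pi.single c (1 : ZMod 2) : Fin n → ZMod 2) b else 0)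
      = if b = c then (if (j.val + 1 = b.val ∨ b.val + 1 = j.val) then (1 : ZMod 2) else 0)
        else 0 := by
    intro b
    rw [Pi.single_apply]
    by_cases hb : b = c <;> by_cases hc : (j.val + 1 = b.val ∨ b.val + 1 = j.val) <;>
      simp [hb, hc]
  simp_rw [this]
  rw [Finset.sum_ite_eq' Finset.univ c]
  simp

lemma pathOp_single' (n : ℕ) (k : ℕ) (hk : k < n) :
    pathOp n (Pi.single (⟨k, hk⟩ : Fin n) 1)
      = (if h : k + 1 < n then Pi.single (⟨k+1, h⟩ : Fin n) 1 else 0)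
      + (if h : 0 < k then Pi.single (⟨k-1, by omega⟩ : Fin n) 1 else 0) := by
  funext j
  rw [pathOp_single]
  by_cases h1 : k + 1 < n <;> by_cases h2 : 0 < k <;>
    simp only [h1, h2, dif_pos, dif_neg, not_lt, not_false_iff, Pi.add_apply, Pi.zero_apply,
      Pi.single_apply, Fin.ext_iff] <;>
    split_ifs <;> simp_all <;> omega


variable {F : Type*} [Field F] [DecidableEq F] {V : Type*} [AddCommGroup V] [Module F V]
  [FiniteDimensional F V]

lemma finrank_ker_aeval (B : Module.End F V) (v₀ : V) (m : Polynomial F)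
    (hm : m.Monic) (hdeg : m.natDegree = Module.finrank F V)
    (hann : aeval B m v₀ = 0)
    (hcyc : ∀ v : V, ∃ g : Polynomial F, aeval B g v₀ = v)
    (f : Polynomial F) (hf : f ≠ 0) :
    Module.finrank F (LinearMap.ker (aeval B f)) = (EuclideanDomain.gcd f m).natDegree := by
  classical
  set n := Module.finrank F V with hn
  set θ : Polynomial F →ₗ[F] V :=
    { toFun := fun g => aeval B g v₀
      map_add' := by intro a b; simp
      map_smul' := by intro c a; simp } with hθ
  have θ_apply : ∀ g, θ g = aeval B g v₀ := fun g => rfl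
  have θ_mul : ∀ g h : Polynomial F, θ (g * h) = aeval B g (θ h) := by
    intro g h
    simp [θ_apply, map_mul, Module.End.mul_apply]
  have θ_m_mul : ∀ h : Polynomial F, θ (m * h) = 0 := by
    intro h
    rw [mul_comm, θ_mul, θ_apply, hann, map_zero]
  have hmne : m ≠ 0 := hm.ne_zero
  have hmdeg : m.degree = (n : WithBot ℕ) := by
    rw [degree_eq_natDegree hmne, hdeg]
  have θ_mod : ∀ g : Polynomial F, θ (g %ₘ m) = θ g := by
    intro g
    conv_rhs => rw [← modByMonic_add_div g m]
    rw [map_add, θ_m_mul, add_zero]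
  have instFD : ∀ k : ℕ, FiniteDimensional F (degreeLT F k) :=
    fun k => Module.Finite.equiv (Polynomial.degreeLTEquiv F k).symm
  have hrankLT : ∀ k : ℕ, Module.finrank F (degreeLT F k) = k := by
    intro k
    rw [(Polynomial.degreeLTEquiv F k).finrank_eq]
    simp
  set θ' : degreeLT F n →ₗ[F] V := θ.comp (Submodule.subtype _) with hθ'
  have θ'_surj : Function.Surjective θ' := by
    intro v
    obtain ⟨g, hg⟩ := hcyc v
    refine ⟨⟨g %ₘ m, ?_⟩, ?_⟩
    · rw [mem_degreeLT]
      exact lt_of_lt_of_le (degree_modByMonic_lt g hm) (le_of_eq hmdeg)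
    · show θ (g %ₘ m) = v
      rw [θ_mod]; exact hg
  have θ'_inj : Function.Injective θ' := by
    have := instFD n
    exact (LinearMap.injective_iff_surjective_of_finrank_eq_finrank (by rw [hrankLT])).2 θ'_surj
  have θ_inj_lt : ∀ g : Polynomial F, g.degree < (n : WithBot ℕ) → θ g = 0 → g = 0 := by
    intro g hg h0
    have h : θ' ⟨g, mem_degreeLT.2 hg⟩ =
        θ' ⟨0, mem_degreeLT.2 (by rw [degree_zero]; exact WithBot.bot_lt_coe n)⟩ := by
      show θ g = θ 0
      rw [h0, map_zero]
    simpa using congrArg Subtype.val (θ'_inj h)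
  set d := EuclideanDomain.gcd f m with hd
  have hdne : d ≠ 0 := by
    rw [hd, Ne, EuclideanDomain.gcd_eq_zero_iff]
    rintro ⟨h1, _⟩; exact hf h1
  obtain ⟨m₁, hm₁⟩ : d ∣ m := EuclideanDomain.gcd_dvd_right f m
  have hm₁ne : m₁ ≠ 0 := by
    rintro rfl; rw [mul_zero] at hm₁; exact hmne hm₁
  -- commuting application lemma
  have comm_app : ∀ (a b : Polynomial F) (v : V), aeval B a v = 0 → aeval B (a * b) v = 0 := by
    intro a b v hv
    rw [mul_comm, map_mul, Module.End.mul_apply, hv, map_zero]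
  have hker : LinearMap.ker (aeval B f) = LinearMap.ker (aeval B d) := by
    apply le_antisymm
    · intro v hv
      rw [LinearMap.mem_ker] at hv ⊢
      have hb := EuclideanDomain.gcd_eq_gcd_ab f m
      rw [← hd] at hb
      have hmv : aeval B m v = 0 := by
        obtain ⟨g, hg⟩ := hcyc v
        rw [← hg, ← θ_apply, ← θ_mul, θ_m_mul]
      rw [hb, map_add, LinearMap.add_apply, comm_app f _ v hv, comm_app m _ v hmv, add_zero]
    · intro v hv
      rw [LinearMap.mem_ker] at hv ⊢
      obtain ⟨c, hc⟩ : d ∣ f := EuclideanDomain.gcd_dvd_left f m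
      rw [hc]
      exact comm_app d c v hv
  -- the map ψ from degreeLT (natDegree d) onto ker d(B)
  set ψ : degreeLT F d.natDegree →ₗ[F] V := θ.comp ((LinearMap.mulLeft F m₁).comp
    (Submodule.subtype _)) with hψ
  have hm₁deg : m₁.natDegree + d.natDegree = n := by
    have := natDegree_mul hdne hm₁ne
    rw [← hm₁, hdeg] at this
    omega
  have ψ_apply : ∀ h : degreeLT F d.natDegree, ψ h = θ (m₁ * (h : Polynomial F)) := fun h => rfl
  have ψ_inj : Function.Injective ψ := by
    rw [← LinearMap.ker_eq_bot, LinearMap.ker_eq_bot']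
    intro h h0
    rw [ψ_apply] at h0
    have hdegh : (m₁ * (h : Polynomial F)).degree < (n : WithBot ℕ) := by
      rcases eq_or_ne (h : Polynomial F) 0 with h' | h'
      · rw [h', mul_zero, degree_zero]
        exact WithBot.bot_lt_coe n
      · rw [degree_mul, degree_eq_natDegree hm₁ne, degree_eq_natDegree h']
        have hh := mem_degreeLT.1 h.2
        rw [degree_eq_natDegree h'] at hh
        have : (h : Polynomial F).natDegree < d.natDegree := by exact_mod_cast hh
        rw [← Nat.cast_add]
        exact_mod_cast by omega
    have := θ_inj_lt _ hdegh h0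
    have h0' : (h : Polynomial F) = 0 := by
      rcases mul_eq_zero.1 this with h' | h'
      · exact absurd h' hm₁ne
      · exact h'
    exact Subtype.ext h0'
  have ψ_range : LinearMap.range ψ = LinearMap.ker (aeval B d) := by
    apply le_antisymm
    · rintro v ⟨h, rfl⟩
      rw [LinearMap.mem_ker, ψ_apply, ← θ_mul, ← mul_assoc, ← hm₁, θ_m_mul]
    · intro v hv
      rw [LinearMap.mem_ker] at hv
      obtain ⟨⟨g, hgmem⟩, hg⟩ := θ'_surj v
      have hgv : θ g = v := hg
      have hθdg : θ (d * g) = 0 := by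
        rw [θ_mul, hgv, hv]
      have hmoddg : θ ((d * g) %ₘ m) = 0 := by rw [θ_mod]; exact hθdg
      have hdvd : m ∣ d * g := by
        rw [← modByMonic_eq_zero_iff_dvd hm]
        refine θ_inj_lt _ ?_ hmoddg
        exact lt_of_lt_of_le (degree_modByMonic_lt _ hm) (le_of_eq hmdeg)
      have hm₁dvd : m₁ ∣ g := by
        rw [hm₁] at hdvd
        exact (mul_dvd_mul_iff_left hdne).1 hdvd
      obtain ⟨h, hh⟩ := hm₁dvd
      have hhmem : h ∈ degreeLT F d.natDegree := by
        rw [mem_degreeLT]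
        rcases eq_or_ne h 0 with rfl | hne
        · rw [degree_zero]; exact WithBot.bot_lt_coe _
        · have hgne : g ≠ 0 := by
            rintro rfl
            exact hne (by simpa [hm₁ne] using hh.symm)
          have hgdeg : g.degree < (n : WithBot ℕ) := mem_degreeLT.1 hgmem
          rw [hh, degree_mul, degree_eq_natDegree hm₁ne, degree_eq_natDegree hne,
            ← Nat.cast_add] at hgdeg
          have : m₁.natDegree + h.natDegree < n := by exact_mod_cast hgdeg
          rw [degree_eq_natDegree hne]
          exact_mod_cast by omega
      refine ⟨⟨h, hhmem⟩, ?_⟩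
      rw [ψ_apply]
      show θ (m₁ * h) = v
      rw [← hh, hgv]
  -- conclude
  have := instFD d.natDegree
  rw [hker, ← ψ_range, LinearMap.finrank_range_of_inj ψ_inj, hrankLT]

section OneDim
variable (n : ℕ) (hn : 0 < n)

/-- `e₀`, the first standard basis vector. -/
noncomputable def e0 (hn : 0 < n) : Fin n → ZMod 2 := Pi.single ⟨0, hn⟩ 1

lemma aeval_pathOp_fibP_e0 : ∀ (k : ℕ) (hk : k < n),
    aeval (pathOp n) (fibP (k+1)) (e0 n hn) = Pi.single (⟨k, hk⟩ : Fin n) 1 := by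
  have key : ∀ k : ℕ, ∀ hk : k < n,
      (aeval (pathOp n) (fibP (k+1)) (e0 n hn) = Pi.single (⟨k, hk⟩ : Fin n) 1) ∧
      (∀ hk1 : k + 1 < n,
        aeval (pathOp n) (fibP (k+2)) (e0 n hn) = Pi.single (⟨k+1, hk1⟩ : Fin n) 1) := by
    intro k
    induction k with
    | zero =>
      intro hk
      constructor
      · rw [fibP_one, map_one]
        rfl
      · intro hk1
        have : fibP 2 = X := by rw [fibP_add_two, fibP_one, fibP_zero, mul_one, add_zero]
        rw [this, aeval_X, e0, pathOp_single' n 0 hk]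
        simp [hk1]
    | succ k ih =>
      intro hk
      have hkn : k < n := by omega
      refine ⟨(ih hkn).2 hk, ?_⟩
      intro hk1
      rw [fibP_add_two (k+1), map_add, map_mul, aeval_X, LinearMap.add_apply,
        Module.End.mul_apply, (ih hkn).2 hk, (ih hkn).1,
        pathOp_single' n (k+1) hk]
      have h2 : 0 < k + 1 := Nat.succ_pos k
      rw [dif_pos hk1, dif_pos h2]
      simp only [Nat.add_sub_cancel]
      rw [add_assoc]
      rw [add_self_pi, add_zero]
  intro k hk
  exact (key k hk).1

lemma aeval_pathOp_fibP_top : aeval (pathOp n) (fibP (n+1)) (e0 n hn) = 0 := by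
  rcases Nat.lt_or_ge 1 n with h1 | h1
  · -- n ≥ 2
    have hn1 : n - 1 < n := by omega
    have hstep : n + 1 = (n - 2) + 1 + 2 := by omega
    have hn2 : n - 2 < n := by omega
    have hr1 : aeval (pathOp n) (fibP (n - 2 + 1 + 1)) (e0 n hn)
        = Pi.single (⟨n-1, hn1⟩ : Fin n) 1 := by
      have : n - 2 + 1 + 1 = (n-1) + 1 := by omega
      rw [this]
      exact aeval_pathOp_fibP_e0 n hn (n-1) hn1
    rw [hstep, fibP_add_two, map_add, map_mul, aeval_X, LinearMap.add_apply,
      Module.End.mul_apply, hr1, aeval_pathOp_fibP_e0 n hn (n-2) hn2,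
      pathOp_single' n (n-1) hn1]
    have hno : ¬ (n - 1 + 1 < n) := by omega
    have hyes : 0 < n - 1 := by omega
    rw [dif_neg hno, dif_pos hyes, zero_add]
    exact add_self_pi _
  · -- n = 1
    have hn1 : n = 1 := by omega
    subst hn1
    have : fibP 2 = X := by rw [fibP_add_two, fibP_one, fibP_zero, mul_one, add_zero]
    rw [this, aeval_X, e0, pathOp_single' 1 0 hn]
    norm_num

lemma Bop_cyclic : ∀ v : Fin n → ZMod 2, ∃ g : Polynomial (ZMod 2),
    aeval (Bop n) g (e0 n hn) = v := by
  intro v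
  refine ⟨∑ j : Fin n, C (v j) * (fibP (j.val+1)).comp (X + 1), ?_⟩
  rw [map_sum]
  rw [LinearMap.sum_apply]
  have : ∀ j : Fin n, aeval (Bop n) (C (v j) * (fibP (j.val+1)).comp (X + 1)) (e0 n hn)
      = Pi.single j (v j) := by
    intro j
    rw [map_mul, aeval_C, Module.End.mul_apply, aeval_Bop_comp]
    have := aeval_pathOp_fibP_e0 n hn j.val j.isLt
    have hj : (⟨j.val, j.isLt⟩ : Fin n) = j := rfl
    rw [hj] at this
    rw [this]
    show (algebraMap (ZMod 2) _ (v j) : Module.End (ZMod 2) _) (Pi.single j 1) = _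
    rw [Module.algebraMap_end_apply]
    funext t
    rw [Pi.smul_apply, Pi.single_apply, Pi.single_apply]
    split <;> simp
  simp_rw [this]
  exact Finset.univ_sum_single v

end OneDim

section Equiv
variable (n : ℕ)

/-- Lift a vector to the grid via the row recurrence. -/
noncomputable def upL : (Fin n → ZMod 2) →ₗ[ZMod 2] (Fin n × Fin n → ZMod 2) where
  toFun v := fun p => aeval (Bop n) (fibP (p.1.val + 1)) v p.2
  map_add' v w := by funext p; simp
  map_smul' c v := by funext p; simp

lemma upL_apply (v : Fin n → ZMod 2) (p : Fin n × Fin n) :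
    upL n v p = aeval (Bop n) (fibP (p.1.val + 1)) v p.2 := rfl

/-- Restriction to the first row. -/
noncomputable def downL (hn : 0 < n) :
    (Fin n × Fin n → ZMod 2) →ₗ[ZMod 2] (Fin n → ZMod 2) :=
  LinearMap.funLeft (ZMod 2) (ZMod 2) (fun j => ((⟨0, hn⟩ : Fin n), j))

lemma downL_apply (hn : 0 < n) (x : Fin n × Fin n → ZMod 2) (j : Fin n) :
    downL n hn x j = x (⟨0, hn⟩, j) := rfl

lemma lightsOut_upL (v : Fin n → ZMod 2) (i j : Fin n) :
    lightsOut (gridGraph n) (upL n v) (i, j)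
      = if i.val = n - 1 then aeval (Bop n) (fibP (n+1)) v j else 0 := by
  have hn : 0 < n := i.pos
  rw [lightsOut_grid_apply]
  have hrow : (fun b => upL n v (i, b)) = aeval (Bop n) (fibP (i.val + 1)) v := rfl
  have hcol : ∀ a : Fin n, upL n v (a, j) = aeval (Bop n) (fibP (a.val + 1)) v j := fun a => rfl
  rw [hrow]
  have hcolsum : pathOp n (fun a => upL n v (a, j)) i
      = (if h : i.val + 1 < n then aeval (Bop n) (fibP (i.val + 2)) v j else 0)
      + (if h : 0 < i.val then aeval (Bop n) (fibP (i.val - 1 + 1)) v j else 0) := by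
    rw [pathOp_apply]
    have := sum_nbr n (fun a => aeval (Bop n) (fibP (a.val + 1)) v j) i.val
    simp only [hcol]
    rw [this]
    have e1 : (if h : i.val + 1 < n
          then aeval (Bop n) (fibP ((⟨i.val + 1, h⟩ : Fin n).val + 1)) v j else 0)
        = (if h : i.val + 1 < n then aeval (Bop n) (fibP (i.val + 2)) v j else 0) := by
      by_cases h : i.val + 1 < n
      · simp only [dif_pos h]
      · simp only [dif_neg h]
    have e2 : (if h : 0 < i.val ∧ i.val - 1 < n
          then aeval (Bop n) (fibP ((⟨i.val - 1, h.2⟩ : Fin n).val + 1)) v j else 0)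
        = (if h : 0 < i.val then aeval (Bop n) (fibP (i.val - 1 + 1)) v j else 0) := by
      by_cases h : 0 < i.val
      · rw [dif_pos (show 0 < i.val ∧ i.val - 1 < n from ⟨h, by omega⟩), dif_pos h]
      · rw [dif_neg (show ¬(0 < i.val ∧ i.val - 1 < n) from fun hc => h hc.1), dif_neg h]
    rw [e1, e2]
  rw [hcolsum]
  have hB : ∀ k : ℕ, upL n v (i, j) + pathOp n (aeval (Bop n) (fibP (i.val + 1)) v) j
      = Bop n (aeval (Bop n) (fibP (i.val + 1)) v) j := fun k => rfl
  -- combine first two terms : x(i,j) + pathOp row = B row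
  have hcomb : upL n v (i, j) + pathOp n (aeval (Bop n) (fibP (i.val + 1)) v) j
      = Bop n (aeval (Bop n) (fibP (i.val + 1)) v) j := rfl
  rw [add_assoc] at *
  rw [← add_assoc (upL n v (i,j)), hcomb]
  -- now case split
  have hrec : ∀ k : ℕ, aeval (Bop n) (fibP (k+2)) v
      = Bop n (aeval (Bop n) (fibP (k+1)) v) + aeval (Bop n) (fibP k) v := by
    intro k
    rw [fibP_add_two, map_add, map_mul, aeval_X, LinearMap.add_apply, Module.End.mul_apply]
  by_cases htop : i.val = n - 1
  · rw [if_pos htop]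
    by_cases h0 : 0 < i.val
    · -- i = n-1 ≥ 1, so i+1 = n is not < n
      have hno : ¬ (i.val + 1 < n) := by omega
      rw [dif_neg hno, dif_pos h0, zero_add]
      have h1 : i.val - 1 + 1 = i.val := by omega
      have h2 : n + 1 = i.val + 2 := by omega
      rw [h1, h2, hrec i.val, Pi.add_apply]
    · -- i = 0 = n-1, n = 1
      have hn1 : n = 1 := by omega
      have hno : ¬ (i.val + 1 < n) := by omega
      rw [dif_neg hno, dif_neg h0, add_zero, add_zero]
      have h2 : n + 1 = i.val + 2 := by omega
      rw [h2, hrec i.val]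
      have : fibP i.val = 0 := by
        have : i.val = 0 := by omega
        rw [this, fibP_zero]
      rw [this, map_zero, Pi.add_apply, LinearMap.zero_apply, Pi.zero_apply, add_zero]
  · rw [if_neg htop]
    have hyes : i.val + 1 < n := by have := i.isLt; omega
    rw [dif_pos hyes]
    by_cases h0 : 0 < i.val
    · rw [dif_pos h0]
      have h1 : i.val - 1 + 1 = i.val := by omega
      rw [h1, hrec i.val, Pi.add_apply]
      have : ∀ a b : ZMod 2, a + (a + b + b) = 0 := by decide
      exact this _ _
    · rw [dif_neg h0, add_zero]
      have h1 : i.val = 0 := by omega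
      have h2 : i.val + 2 = 0 + 2 := by omega
      rw [h2, hrec 0]
      have : fibP 0 = 0 := fibP_zero
      rw [this, map_zero, Pi.add_apply, LinearMap.zero_apply, Pi.zero_apply, add_zero]
      have h3 : (0:ℕ) + 1 = i.val + 1 := by omega
      rw [h3]
      exact CharTwo.add_self_eq_zero _
end Equiv

section Equiv2
variable (n : ℕ) (hn : 0 < n)

lemma col_nbr_sum (x : Fin n × Fin n → ZMod 2) (j : Fin n) (k : ℕ) (hk : k < n) :
    pathOp n (fun a => x (a, j)) ⟨k, hk⟩
      = (if h : k + 1 < n then x (⟨k+1, h⟩, j) else 0)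
      + (if h : 0 < k then x (⟨k-1, by omega⟩, j) else 0) := by
  rw [pathOp_apply]
  have hs := sum_nbr n (fun a => x (a, j)) k
  simp only [Fin.val_mk]
  rw [hs]
  congr 1
  by_cases h : 0 < k
  · rw [dif_pos (show 0 < k ∧ k - 1 < n from ⟨h, by omega⟩), dif_pos h]
  · rw [dif_neg (show ¬(0 < k ∧ k - 1 < n) from fun hc => h hc.1), dif_neg h]

lemma rows_eq (x : Fin n × Fin n → ZMod 2) (hx : lightsOut (gridGraph n) x = 0) :
    ∀ (k : ℕ) (hk : k < n),
      (fun j => x (⟨k, hk⟩, j)) = aeval (Bop n) (fibP (k+1)) (downL n hn x) := by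
  have hrow_eq : ∀ (k : ℕ) (hk : k < n) (j : Fin n),
      x (⟨k, hk⟩, j) + pathOp n (fun b => x (⟨k, hk⟩, b)) j
        + ((if h : k + 1 < n then x (⟨k+1, h⟩, j) else 0)
            + (if h : 0 < k then x (⟨k-1, by omega⟩, j) else 0)) = 0 := by
    intro k hk j
    have heq := congrFun hx (⟨k, hk⟩, j)
    rw [lightsOut_grid_apply, col_nbr_sum n x j k hk] at heq
    exact heq.trans rfl
  have key : ∀ k : ℕ, ∀ hk : k < n,
      ((fun j => x (⟨k, hk⟩, j)) = aeval (Bop n) (fibP (k+1)) (downL n hn x)) ∧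
      (∀ hk1 : k + 1 < n,
        (fun j => x (⟨k+1, hk1⟩, j)) = aeval (Bop n) (fibP (k+2)) (downL n hn x)) := by
    intro k
    induction k with
    | zero =>
      intro hk
      have base : (fun j => x (⟨0, hk⟩, j)) = aeval (Bop n) (fibP 1) (downL n hn x) := by
        rw [fibP_one, map_one]
        funext j
        rfl
      refine ⟨base, ?_⟩
      intro hk1
      funext j
      have heq := hrow_eq 0 hk j
      rw [dif_pos hk1, dif_neg (by omega), add_zero] at heq
      have h2 : fibP 2 = X := by rw [fibP_add_two, fibP_one, fibP_zero, mul_one, add_zero]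
      rw [h2, aeval_X]
      have hB : Bop n (downL n hn x) j
          = x (⟨0, hk⟩, j) + pathOp n (fun b => x (⟨0, hk⟩, b)) j := rfl
      rw [hB]
      have hsolve : ∀ a b c : ZMod 2, a + b + c = 0 → c = a + b := by decide
      exact hsolve _ _ _ heq
    | succ k ih =>
      intro hk
      have hkn : k < n := by omega
      refine ⟨(ih hkn).2 hk, ?_⟩
      intro hk1
      funext j
      have heq := hrow_eq (k+1) hk j
      rw [dif_pos hk1, dif_pos (Nat.succ_pos k)] at heq
      have hsolve : ∀ a b c d : ZMod 2, a + b + (c + d) = 0 → c = a + b + d := by decide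
      have hstep := hsolve _ _ _ _ heq
      rw [hstep]
      have hBrow : x (⟨k+1, hk⟩, j) + pathOp n (fun b => x (⟨k+1, hk⟩, b)) j
          = Bop n (fun b => x (⟨k+1, hk⟩, b)) j := rfl
      rw [hBrow, (ih hkn).2 hk]
      have hprev : (⟨k+1-1, by omega⟩ : Fin n) = (⟨k, hkn⟩ : Fin n) := by
        apply Fin.ext; simp
      have hx_prev : x (⟨k+1-1, by omega⟩, j) = aeval (Bop n) (fibP (k+1)) (downL n hn x) j := by
        rw [hprev]
        exact congrFun ((ih hkn).1) j
      rw [hx_prev]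
      rw [fibP_add_two (k+1), map_add, map_mul, aeval_X, LinearMap.add_apply,
        Module.End.mul_apply, Pi.add_apply]
  intro k hk
  exact (key k hk).1

end Equiv2

section Equiv3
variable (n : ℕ)

lemma up_down (hn : 0 < n) (x : Fin n × Fin n → ZMod 2) (hx : lightsOut (gridGraph n) x = 0) :
    upL n (downL n hn x) = x := by
  funext p
  rw [upL_apply]
  have := congrFun (rows_eq n hn x hx p.1.val p.1.isLt) p.2
  have hp : (⟨p.1.val, p.1.isLt⟩ : Fin n) = p.1 := Fin.eta _ _
  rw [hp] at this
  rw [← this]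

lemma down_mem_ker (hn : 0 < n) (x : Fin n × Fin n → ZMod 2) (hx : lightsOut (gridGraph n) x = 0) :
    aeval (Bop n) (fibP (n+1)) (downL n hn x) = 0 := by
  funext j
  have hud := up_down n hn x hx
  have h0 := congrFun hx ((⟨n-1, by omega⟩ : Fin n), j)
  conv_lhs at h0 => rw [← hud]
  have := lightsOut_upL n (downL n hn x) ⟨n-1, by omega⟩ j
  rw [this] at h0
  rw [if_pos rfl] at h0
  exact h0.trans rfl

lemma up_mem_ker (v : Fin n → ZMod 2) (hv : aeval (Bop n) (fibP (n+1)) v = 0) :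
    lightsOut (gridGraph n) (upL n v) = 0 := by
  funext p
  have := lightsOut_upL n v p.1 p.2
  have hp : (p.1, p.2) = p := rfl
  rw [hp] at this
  rw [this, hv]
  split <;> rfl

lemma down_up (hn : 0 < n) (v : Fin n → ZMod 2) : downL n hn (upL n v) = v := by
  funext j
  show upL n v (⟨0, hn⟩, j) = v j
  rw [upL_apply]
  show aeval (Bop n) (fibP (0+1)) v j = v j
  rw [fibP_one, map_one]
  rfl

noncomputable def kerEquiv (hn : 0 < n) :
    LinearMap.ker (lightsOut (gridGraph n)) ≃ₗ[ZMod 2]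
      LinearMap.ker (aeval (Bop n) (fibP (n+1))) := by
  refine LinearEquiv.ofLinear
    ((downL n hn).restrict (p := LinearMap.ker (lightsOut (gridGraph n)))
      (q := LinearMap.ker (aeval (Bop n) (fibP (n+1)))) ?_)
    ((upL n).restrict (p := LinearMap.ker (aeval (Bop n) (fibP (n+1))))
      (q := LinearMap.ker (lightsOut (gridGraph n))) ?_) ?_ ?_
  · intro x hx
    rw [LinearMap.mem_ker] at hx ⊢
    exact down_mem_ker n hn x hx
  · intro v hv
    rw [LinearMap.mem_ker] at hv ⊢
    exact up_mem_ker n v hv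
  · apply LinearMap.ext
    rintro ⟨v, hv⟩
    apply Subtype.ext
    show downL n hn (upL n v) = v
    exact down_up n hn v
  · apply LinearMap.ext
    rintro ⟨x, hx⟩
    apply Subtype.ext
    show upL n (downL n hn x) = x
    exact up_down n hn x (LinearMap.mem_ker.1 hx)

lemma gridNullity_eq_natDegree_gcd (hn : 0 < n) :
    gridNullity n = (EuclideanDomain.gcd (fibP (n+1))
      ((fibP (n+1)).comp (X + 1))).natDegree := by
  have h1 : gridNullity n
      = Module.finrank (ZMod 2) (LinearMap.ker (aeval (Bop n) (fibP (n+1)))) :=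
    (kerEquiv n hn).finrank_eq
  rw [h1]
  have hone : (X + 1 : Polynomial (ZMod 2)) = X + C 1 := by rw [map_one]
  have hmonic : ((fibP (n+1)).comp (X + 1)).Monic := by
    rw [hone]
    exact (fibP_monic_degree n).1.comp_X_add_C 1
  have hfinrank : Module.finrank (ZMod 2) (Fin n → ZMod 2) = n := by
    simp [Module.finrank_fin_fun]
  refine finrank_ker_aeval (Bop n) (e0 n hn) _ hmonic ?_ ?_ (Bop_cyclic n hn)
    (fibP (n+1)) (fibP_ne_zero n)
  · rw [natDegree_comp, fibP_natDegree, hone, natDegree_X_add_C, mul_one, hfinrank]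
  · rw [aeval_Bop_comp]
    exact aeval_pathOp_fibP_top n hn

end Equiv3

lemma gridNullity_zero : gridNullity 0 = 0 := by
  unfold gridNullity
  haveI : IsEmpty (Fin 0 × Fin 0) := by infer_instance
  haveI : Subsingleton (Fin 0 × Fin 0 → ZMod 2) := by infer_instance
  exact Module.finrank_zero_of_subsingleton

/-- If `d(n) = 2`, then `n` is odd. -/
theorem odd_of_gridNullity_eq_two (n : ℕ) (h : gridNullity n = 2) : Odd n := by
  by_contra hodd
  rw [Nat.not_odd_iff_even] at hodd
  obtain ⟨k, hk⟩ := hodd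
  have hn : 0 < n := by
    rcases Nat.eq_zero_or_pos n with h0 | h0
    · exfalso
      rw [h0, gridNullity_zero] at h
      exact absurd h (by norm_num)
    · exact h0
  rw [gridNullity_eq_natDegree_gcd n hn] at h
  set Q : Polynomial (ZMod 2) := fibP (k+1) + fibP k with hQ
  have hf : fibP (n+1) = Q^2 := by
    have h21 : n + 1 = 2*k+1 := by omega
    rw [h21, fibP_sq k]
  have hcomp : (fibP (n+1)).comp (X+1) = (Q.comp (X+1))^2 := by
    rw [hf, Polynomial.pow_comp]
  set d := EuclideanDomain.gcd (fibP (n+1)) ((fibP (n+1)).comp (X+1)) with hd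
  have hfne : fibP (n+1) ≠ 0 := fibP_ne_zero n
  have hd0 : d ≠ 0 := by
    rw [hd, Ne, EuclideanDomain.gcd_eq_zero_iff]
    rintro ⟨h1, _⟩; exact hfne h1
  have hdnu : ¬IsUnit d := by
    intro hu
    rw [natDegree_eq_zero_of_isUnit hu] at h
    norm_num at h
  obtain ⟨q, hqirr, hqdvd⟩ := WfDvdMonoid.exists_irreducible_factor hdnu hd0
  have hqprime : Prime q := UniqueFactorizationMonoid.irreducible_iff_prime.mp hqirr
  have hqQ : q ∣ Q := by
    have h1 : q ∣ Q^2 := dvd_trans hqdvd (by rw [← hf]; exact EuclideanDomain.gcd_dvd_left _ _)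
    exact hqprime.dvd_of_dvd_pow h1
  have hqQ' : q ∣ Q.comp (X+1) := by
    have h1 : q ∣ (Q.comp (X+1))^2 :=
      dvd_trans hqdvd (by rw [← hcomp]; exact EuclideanDomain.gcd_dvd_right _ _)
    exact hqprime.dvd_of_dvd_pow h1
  have hq1 : 1 ≤ q.natDegree := by
    rcases Nat.eq_zero_or_pos q.natDegree with hq0 | hq0
    · exfalso
      have hqc := Polynomial.eq_C_of_natDegree_eq_zero hq0
      have hne : q.coeff 0 ≠ 0 := fun hc => hqirr.ne_zero (by rw [hqc, hc, map_zero])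
      exact hqirr.not_isUnit (hqc ▸ Polynomial.isUnit_C.2 hne.isUnit)
    · exact hq0
  rcases Nat.lt_or_ge q.natDegree 2 with hqd | hqd
  · -- q has degree one: q = X - C a with a = q.coeff 0
    have hqdeg1 : q.natDegree = 1 := by omega
    have hqc1 : q.coeff 1 = 1 := by
      have hlead : q.coeff 1 = q.leadingCoeff := by rw [Polynomial.leadingCoeff, hqdeg1]
      have : q.leadingCoeff ≠ 0 := by
        rw [Polynomial.leadingCoeff_ne_zero]; exact hqirr.ne_zero
      rw [hlead]
      have hone : ∀ u : ZMod 2, u ≠ 0 → u = 1 := by decide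
      exact hone _ this
    set a := q.coeff 0 with ha
    have hqform : q = X - C a := by
      have hdle : q.degree ≤ 1 := by
        rw [Polynomial.degree_eq_natDegree hqirr.ne_zero, hqdeg1]
        norm_num
      have := Polynomial.eq_X_add_C_of_degree_le_one hdle
      rw [hqc1, map_one, one_mul] at this
      rw [this, CharTwo.sub_eq_add]
    have hroot1 : Q.eval a = 0 := by
      have : (X - C a) ∣ Q := hqform ▸ hqQ
      exact Polynomial.dvd_iff_isRoot.1 this
    have hroot2 : Q.eval (a + 1) = 0 := by
      have : (X - C a) ∣ Q.comp (X+1) := hqform ▸ hqQ'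
      have h2 := Polynomial.dvd_iff_isRoot.1 this
      rw [Polynomial.IsRoot, Polynomial.eval_comp] at h2
      simpa using h2
    set b := a + 1 with hb
    have hab : a - b = -1 := by rw [hb]; ring
    have hcop : IsCoprime (X - C a) (X - C b : Polynomial (ZMod 2)) :=
      Polynomial.isCoprime_X_sub_C_of_isUnit_sub (by rw [hab]; exact isUnit_one.neg)
    have hdvdQ : (X - C a) * (X - C b) ∣ Q :=
      hcop.mul_dvd (Polynomial.dvd_iff_isRoot.2 hroot1) (Polynomial.dvd_iff_isRoot.2 hroot2)
    have hrootc1 : (Q.comp (X+1)).eval a = 0 := by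
      rw [Polynomial.eval_comp]
      simpa using hroot2
    have hrootc2 : (Q.comp (X+1)).eval b = 0 := by
      rw [Polynomial.eval_comp]
      have : b + 1 = a := by
        rw [hb, add_assoc]
        have : (1 : ZMod 2) + 1 = 0 := by decide
        rw [this, add_zero]
      simpa [this] using hroot1
    have hdvdQ' : (X - C a) * (X - C b) ∣ Q.comp (X+1) :=
      hcop.mul_dvd (Polynomial.dvd_iff_isRoot.2 hrootc1) (Polynomial.dvd_iff_isRoot.2 hrootc2)
    have hsq : ((X - C a) * (X - C b))^2 ∣ d := by
      refine EuclideanDomain.dvd_gcd ?_ ?_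
      · rw [hf]; exact pow_dvd_pow_of_dvd hdvdQ 2
      · rw [hcomp]; exact pow_dvd_pow_of_dvd hdvdQ' 2
    have hcontra := Polynomial.natDegree_le_of_dvd hsq hd0
    rw [h] at hcontra
    have hP : ((X - C a) * (X - C b) : Polynomial (ZMod 2)).natDegree = 2 := by
      rw [Polynomial.natDegree_mul (Polynomial.X_sub_C_ne_zero a) (Polynomial.X_sub_C_ne_zero b),
        Polynomial.natDegree_X_sub_C, Polynomial.natDegree_X_sub_C]
    have hPmonic : ((X - C a) * (X - C b) : Polynomial (ZMod 2)).Monic :=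
      (Polynomial.monic_X_sub_C a).mul (Polynomial.monic_X_sub_C b)
    rw [hPmonic.natDegree_pow, hP] at hcontra
    omega
  · -- q has degree ≥ 2
    have hsq : q^2 ∣ d := by
      refine EuclideanDomain.dvd_gcd ?_ ?_
      · rw [hf]; exact pow_dvd_pow_of_dvd hqQ 2
      · rw [hcomp]; exact pow_dvd_pow_of_dvd hqQ' 2
    have hcontra := Polynomial.natDegree_le_of_dvd hsq hd0
    rw [h] at hcontra
    have : (q^2).natDegree = 2 * q.natDegree := by
      rw [Polynomial.natDegree_pow]
    omega
end
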